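/- arXiv:1702.06396 — 6 statements merged into one kernel-verified Lean document; each statement's English description precedes it below -/
import Mathlib

section
/- Let $(\lambda_i)_{i\ge1}$ be nonnegative reals with $0 < \sum_i \lambda_i < \infty$, let $Z_i \sim \mathrm{Exp}(\lambda_i)$ be independent, let $W(t) := \sum_i \mathbf{1}[Z_i \le t]$, and let $L := |\{i : \lambda_i > 0\}| \le \infty$. Then as $t \to \infty$: $\mathbb{E} W(t) \to L$, $W(t) \to L$ almost surely, and $W(t)/\mathbb{E} W(t) \to 1$ almost surely. -/
open MeasureTheory ProbabilityTheory Filter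
open scoped ENNReal

lemma aux_tsum_iSup {f : ℕ → ℕ → ℝ≥0∞} (h : ∀ i, Monotone (f i)) :
    ⨆ n, ∑' i, f i n = ∑' i, ⨆ n, f i n := by
  have : ∀ g : ℕ → ℝ≥0∞, ∑' i, g i = ∫⁻ i, g i ∂(Measure.count) := fun g =>
    (MeasureTheory.lintegral_count g).symm
  rw [this]
  simp_rw [this]
  rw [← MeasureTheory.lintegral_iSup (fun n => measurable_of_countable _)
    (fun a b hab i => h i hab)]

lemma aux_iSup_real_nat {f : ℝ → ℝ≥0∞} (h : Monotone f) :
    ⨆ t : ℝ, f t = ⨆ n : ℕ, f n :=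
  le_antisymm (iSup_le fun t => le_iSup_of_le ⌈t⌉₊ (h (Nat.le_ceil t)))
    (iSup_le fun n => le_iSup f n)

lemma aux_mono_exp {l : ℝ} (hl : 0 ≤ l) :
    Monotone (fun t : ℝ => ENNReal.ofReal (1 - Real.exp (-l * t))) := by
  intro a b hab
  apply ENNReal.ofReal_le_ofReal
  have : Real.exp (-l * b) ≤ Real.exp (-l * a) := by
    apply Real.exp_le_exp.2
    nlinarith
  linarith

lemma aux_iSup_exp {l : ℝ} (hl : 0 < l) :
    ⨆ n : ℕ, ENNReal.ofReal (1 - Real.exp (-l * n)) = 1 := by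
  refine iSup_eq_of_tendsto (fun a b hab => aux_mono_exp hl.le (by exact_mod_cast hab)) ?_
  have h1 : Tendsto (fun n : ℕ => -l * n) atTop atBot := by
    have : Tendsto (fun x : ℝ => -l * x) atTop atBot := by
      simpa using tendsto_neg_atBot_iff.mpr (tendsto_id.const_mul_atTop hl)
    exact this.comp tendsto_natCast_atTop_atTop
  have h2 : Tendsto (fun n : ℕ => 1 - Real.exp (-l * n)) atTop (nhds 1) := by
    have := Real.tendsto_exp_atBot.comp h1
    simpa using (tendsto_const_nhds (x := (1:ℝ))).sub this
  have := (ENNReal.continuous_ofReal.tendsto 1).comp h2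
  simpa [Function.comp_def] using this


open MeasureTheory ProbabilityTheory Filter
open scoped ENNReal

/-- With `L = #{i : λᵢ > 0} ≤ ∞`, as `t → ∞`: `E W(t) → L`,
`W(t) → L` a.s., and `W(t)/E W(t) → 1` a.s. -/
theorem stmt4 {Ω : Type*} [MeasurableSpace Ω] (P : Measure Ω) [IsProbabilityMeasure P]
    (lam : ℕ → ℝ) (hlam : ∀ i, 0 ≤ lam i) (hsum : Summable lam)
    (hpos : 0 < ∑' i, lam i)
    (Z : ℕ → Ω → ℝ≥0∞) (hmeas : ∀ i, Measurable (Z i))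
    (hindep : iIndepFun Z P)
    (hdist : ∀ i, ∀ t : ℝ, 0 ≤ t →
      P {ω | Z i ω ≤ ENNReal.ofReal t} = ENNReal.ofReal (1 - Real.exp (-(lam i) * t)))
    (W : ℝ → Ω → ℝ≥0∞)
    (hW : ∀ t ω, W t ω = ∑' i, Set.indicator {ω' | Z i ω' ≤ ENNReal.ofReal t} (fun _ => (1:ℝ≥0∞)) ω)
    (L : ℝ≥0∞) (hL : L = ∑' i, if 0 < lam i then (1:ℝ≥0∞) else 0) :
    Tendsto (fun t : ℝ => ∫⁻ ω, W t ω ∂P) atTop (nhds L) ∧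
    (∀ᵐ ω ∂P, Tendsto (fun t : ℝ => W t ω) atTop (nhds L)) ∧
    (∀ᵐ ω ∂P, Tendsto (fun t : ℝ => W t ω / ∫⁻ ω', W t ω' ∂P) atTop (nhds 1)) := by
  classical
  set A : ℕ → ℝ → Set Ω := fun i t => {ω | Z i ω ≤ ENNReal.ofReal t} with hA
  have hAmeas : ∀ i t, MeasurableSet (A i t) := fun i t => hmeas i measurableSet_Iic
  have hAmono : ∀ i, Monotone (fun t => A i t) := fun i a b hab ω h =>
    le_trans h (ENNReal.ofReal_le_ofReal hab)
  have hWmono : ∀ ω, Monotone (fun t => W t ω) := by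
    intro ω a b hab
    show W a ω ≤ W b ω
    rw [hW, hW]
    exact ENNReal.tsum_le_tsum fun i =>
      Set.indicator_le_indicator_of_subset (hAmono i hab) (fun _ => zero_le) ω
  have hm_eq : ∀ t, ∫⁻ ω, W t ω ∂P = ∑' i, P (A i t) := by
    intro t
    calc ∫⁻ ω, W t ω ∂P
        = ∫⁻ ω, ∑' i, (A i t).indicator (fun _ => (1:ℝ≥0∞)) ω ∂P := by simp_rw [hW]; rfl
      _ = ∑' i, ∫⁻ ω, (A i t).indicator (fun _ => (1:ℝ≥0∞)) ω ∂P :=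
          lintegral_tsum fun i => (measurable_one.indicator (hAmeas i t)).aemeasurable
      _ = ∑' i, P (A i t) := by
          refine tsum_congr fun i => ?_
          rw [lintegral_indicator_const (hAmeas i t), one_mul]
  have hm_mono : Monotone (fun t => ∫⁻ ω, W t ω ∂P) := fun a b hab =>
    lintegral_mono fun ω => hWmono ω hab
  have hdist' : ∀ i (n : ℕ), P (A i n) = ENNReal.ofReal (1 - Real.exp (-(lam i) * n)) :=
    fun i n => hdist i n (Nat.cast_nonneg n)
  have hiSup_i : ∀ i, (⨆ n : ℕ, P (A i n)) = (if 0 < lam i then (1:ℝ≥0∞) else 0) := by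
    intro i
    simp_rw [hdist']
    by_cases h : 0 < lam i
    · rw [if_pos h, aux_iSup_exp h]
    · have h0 : lam i = 0 := le_antisymm (not_lt.1 h) (hlam i)
      simp [h0]
  have part1 : Tendsto (fun t : ℝ => ∫⁻ ω, W t ω ∂P) atTop (nhds L) := by
    have h1 : (⨆ t : ℝ, ∫⁻ ω, W t ω ∂P) = L := by
      rw [aux_iSup_real_nat hm_mono]
      simp_rw [hm_eq]
      rw [aux_tsum_iSup (fun i a b hab => measure_mono (hAmono i (by exact_mod_cast hab)))]
      rw [hL]
      exact tsum_congr hiSup_i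
    rw [← h1]
    exact tendsto_atTop_iSup hm_mono
  have hZfin : ∀ i, {ω | Z i ω ≠ ∞} = ⋃ n : ℕ, A i n := by
    intro i
    ext ω
    simp only [Set.mem_setOf_eq, Set.mem_iUnion, hA]
    constructor
    · intro h
      refine ⟨⌈(Z i ω).toReal⌉₊, ?_⟩
      calc Z i ω = ENNReal.ofReal (Z i ω).toReal := (ENNReal.ofReal_toReal h).symm
        _ ≤ _ := ENNReal.ofReal_le_ofReal (Nat.le_ceil _)
    · rintro ⟨n, h⟩
      exact ne_top_of_le_ne_top ENNReal.ofReal_ne_top h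
  have hPfin : ∀ i, P {ω | Z i ω ≠ ∞} = (if 0 < lam i then 1 else 0) := by
    intro i
    have hmono : Monotone fun n : ℕ => A i n := fun a b hab =>
      hAmono i (by exact_mod_cast hab)
    rw [hZfin i, hmono.directed_le.measure_iUnion, hiSup_i i]
  have hae2 : ∀ᵐ ω ∂P, ∀ i, (Z i ω ≠ ∞ ↔ 0 < lam i) := by
    rw [ae_all_iff]
    intro i
    by_cases h : 0 < lam i
    · have h1 : P {ω | Z i ω ≠ ∞} = 1 := by rw [hPfin i, if_pos h]
      have h2 : ∀ᵐ ω ∂P, Z i ω ≠ ∞ := by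
        rw [ae_iff]
        have hms : MeasurableSet {ω | Z i ω ≠ ∞} := hmeas i (measurableSet_singleton ∞).compl
        have he : {ω | ¬ Z i ω ≠ ∞} = {ω | Z i ω ≠ ∞}ᶜ := by ext ω; simp
        rw [he, measure_compl hms (measure_ne_top _ _), h1, measure_univ, tsub_self]
      filter_upwards [h2] with ω hω
      simp [hω, h]
    · have h1 : P {ω | Z i ω ≠ ∞} = 0 := by rw [hPfin i, if_neg h]
      have h2 : ∀ᵐ ω ∂P, Z i ω = ∞ := by
        rw [ae_iff]
        simpa using h1
      filter_upwards [h2] with ω hω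
      simp [hω, h]
  have part2 : ∀ᵐ ω ∂P, Tendsto (fun t : ℝ => W t ω) atTop (nhds L) := by
    filter_upwards [hae2] with ω hω
    have h1 : (⨆ t : ℝ, W t ω) = L := by
      rw [aux_iSup_real_nat (hWmono ω)]
      simp_rw [hW]
      rw [aux_tsum_iSup (fun i a b hab =>
        Set.indicator_le_indicator_of_subset (hAmono i (by exact_mod_cast hab))
          (fun _ => zero_le) ω)]
      rw [hL]
      refine tsum_congr fun i => ?_
      by_cases hfin : Z i ω ≠ ∞
      · rw [if_pos ((hω i).1 hfin)]
        refine le_antisymm (iSup_le fun n => ?_) ?_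
        · by_cases hmem : ω ∈ A i (n:ℝ) <;>
            simp [Set.indicator_of_mem, Set.indicator_of_notMem, hmem]
        · have : ω ∈ ⋃ n : ℕ, A i n := by rw [← hZfin i]; exact hfin
          obtain ⟨n, hn⟩ := Set.mem_iUnion.1 this
          refine le_iSup_of_le n ?_
          rw [Set.indicator_of_mem hn]
      · rw [if_neg (fun hp => hfin ((hω i).2 hp))]
        push_neg at hfin
        refine le_antisymm (iSup_le fun n => ?_) zero_le
        have hnot : ω ∉ A i (n:ℝ) := by
          intro hmem
          have hmem' : Z i ω ≤ ENNReal.ofReal (n:ℝ) := hmem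
          rw [hfin] at hmem'
          exact absurd (top_le_iff.mp hmem') ENNReal.ofReal_ne_top
        rw [Set.indicator_of_notMem hnot]
    rw [← h1]
    exact tendsto_atTop_iSup (hWmono ω)
  refine ⟨part1, part2, ?_⟩
  by_cases hLtop : L = ∞
  · -- L = ∞ : Chebyshev + Borel-Cantelli argument
    set p : ℕ → ℝ → ℝ := fun i t => 1 - Real.exp (-(lam i) * t) with hp
    have hp_nonneg : ∀ i t, 0 ≤ t → 0 ≤ p i t := by
      intro i t ht
      have : Real.exp (-(lam i) * t) ≤ 1 := by
        rw [Real.exp_le_one_iff]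
        have := hlam i
        nlinarith
      simp only [hp]
      linarith
    have hp_le : ∀ i t, p i t ≤ lam i * t := by
      intro i t
      have := Real.add_one_le_exp (-(lam i) * t)
      simp only [hp]
      linarith
    have hp_mono : ∀ i, Monotone (p i) := by
      intro i a b hab
      have : Real.exp (-(lam i) * b) ≤ Real.exp (-(lam i) * a) := by
        apply Real.exp_le_exp.2
        have := hlam i
        nlinarith
      simp only [hp]
      linarith
    have hp_cont : ∀ i, Continuous (p i) := by
      intro i
      simp only [hp]
      fun_prop
    have hp_summ : ∀ t, 0 ≤ t → Summable (fun i => p i t) := by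
      intro t ht
      exact Summable.of_nonneg_of_le (fun i => hp_nonneg i t ht) (fun i => hp_le i t)
        (hsum.mul_right t)
    set M : ℝ → ℝ := fun t => ∑' i, p i t with hM
    have hM_nonneg : ∀ t, 0 ≤ t → 0 ≤ M t := fun t ht =>
      tsum_nonneg (fun i => hp_nonneg i t ht)
    have hmM : ∀ t, 0 ≤ t → ∫⁻ ω, W t ω ∂P = ENNReal.ofReal (M t) := by
      intro t ht
      rw [hm_eq t, ENNReal.ofReal_tsum_of_nonneg (fun i => hp_nonneg i t ht) (hp_summ t ht)]
      exact tsum_congr fun i => hdist i t ht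
    have hM_mono : ∀ a b, 0 ≤ a → a ≤ b → M a ≤ M b := by
      intro a b ha hab
      exact Summable.tsum_le_tsum (fun i => hp_mono i hab) (hp_summ a ha) (hp_summ b (ha.trans hab))
    have hM_partial : ∀ t, 0 ≤ t →
        Tendsto (fun n => ∑ i ∈ Finset.range n, p i t) atTop (nhds (M t)) := by
      intro t ht
      exact (hp_summ t ht).hasSum.tendsto_sum_nat
    have hM_cont : ∀ T : ℝ, 0 ≤ T → ContinuousOn M (Set.Icc 0 T) := by
      intro T hT
      have hbound : ∀ i (x : ℝ), x ∈ Set.Icc 0 T → ‖p i x‖ ≤ lam i * T := by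
        intro i x hx
        rw [Real.norm_eq_abs, abs_of_nonneg (hp_nonneg i x hx.1)]
        calc p i x ≤ lam i * x := hp_le i x
          _ ≤ lam i * T := mul_le_mul_of_nonneg_left hx.2 (hlam i)
      have := tendstoUniformlyOn_tsum (hsum.mul_right T) hbound
      exact this.continuousOn (Filter.Eventually.of_forall fun n =>
        (continuous_finset_sum _ fun i _ => hp_cont i).continuousOn).frequently
    have hM_unbounded : ∀ C : ℝ, ∃ T, 0 ≤ T ∧ C ≤ M T := by
      intro C
      have h1 : Tendsto (fun t : ℝ => ∫⁻ ω, W t ω ∂P) atTop (nhds ⊤) := hLtop ▸ part1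
      have h2 : ∀ᶠ t : ℝ in atTop, ENNReal.ofReal C < ∫⁻ ω, W t ω ∂P :=
        h1.eventually (lt_mem_nhds (ENNReal.ofReal_lt_top))
      obtain ⟨T, hT1, hT2⟩ := ((h2.and (eventually_ge_atTop (0:ℝ))).exists)
      refine ⟨T, hT2, ?_⟩
      rw [hmM T hT2] at hT1
      by_contra hc
      push_neg at hc
      exact absurd (ENNReal.ofReal_le_ofReal hc.le) (not_le.2 hT1)
    have hM0 : M 0 = 0 := by
      simp only [hM, hp]
      simp
    have hu : ∀ k : ℕ, ∃ t, 0 ≤ t ∧ M t = ((k:ℝ)+1)^2 := by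
      intro k
      obtain ⟨T, hT0, hTC⟩ := hM_unbounded (((k:ℝ)+1)^2)
      have hmem : ((k:ℝ)+1)^2 ∈ Set.Icc (M 0) (M T) := by
        constructor
        · rw [hM0]; positivity
        · exact hTC
      obtain ⟨t, ht1, ht2⟩ := intermediate_value_Icc hT0 (hM_cont T hT0) hmem
      exact ⟨t, ht1.1, ht2⟩
    choose u hu0 huM using hu
    have hustrict : StrictMono u := by
      apply strictMono_nat_of_lt_succ
      intro k
      by_contra h
      push_neg at h
      have h2 : M (u (k+1)) ≤ M (u k) := hM_mono _ _ (hu0 (k+1)) h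
      rw [huM, huM] at h2
      push_cast at h2
      nlinarith [(Nat.cast_nonneg k : (0:ℝ) ≤ (k:ℝ))]
    have hutop : Tendsto u atTop atTop := by
      rw [tendsto_atTop]
      intro b
      set b' := max b 0 with hb'
      obtain ⟨K, hK⟩ := exists_nat_gt (M b')
      rw [eventually_atTop]
      refine ⟨K, fun k hk => ?_⟩
      have h1 : M b' < ((k:ℝ)+1)^2 := by
        have : (K:ℝ) ≤ ((k:ℝ)+1)^2 := by
          have : (K:ℝ) ≤ (k:ℝ) := Nat.cast_le.2 hk
          nlinarith [(Nat.cast_nonneg k : (0:ℝ) ≤ (k:ℝ))]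
        linarith
      rw [← huM k] at h1
      have h2 : b' < u k := by
        by_contra hc
        push_neg at hc
        exact absurd (hM_mono _ _ (hu0 k) hc) (not_le.2 h1)
      exact (le_max_left b 0).trans h2.le
    have hcheb : ∀ t : ℝ, 0 ≤ t → 0 < M t → ∀ ε : ℝ, 0 < ε → ε < 1 →
        P {ω | ENNReal.ofReal ((1+ε) * M t) < W t ω} ≤ ENNReal.ofReal (1 / (ε^2 * M t)) ∧
        P {ω | W t ω < ENNReal.ofReal ((1-ε) * M t)} ≤ ENNReal.ofReal (4 / (ε^2 * M t)) := by
      intro t ht hMt ε hε hε1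
      set X : ℕ → Ω → ℝ := fun i => (A i t).indicator (fun _ => 1) with hX
      have hXmeas : ∀ i, Measurable (X i) := fun i => measurable_const.indicator (hAmeas i t)
      have hXle : ∀ i ω, ‖X i ω‖ ≤ 1 := by
        intro i ω
        rw [Real.norm_eq_abs]
        by_cases hmem : ω ∈ A i t <;>
          simp [hX, Set.indicator_of_mem, Set.indicator_of_notMem, hmem]
      have hXnonneg : ∀ i ω, 0 ≤ X i ω := fun i ω =>
        Set.indicator_nonneg (fun _ _ => zero_le_one) ω
      have hXmem : ∀ i, MemLp (X i) 2 P := fun i =>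
        MemLp.of_bound (hXmeas i).aestronglyMeasurable 1 (Eventually.of_forall (hXle i))
      have hXexp : ∀ i, ∫ ω, X i ω ∂P = p i t := by
        intro i
        rw [hX]
        simp only []
        rw [integral_indicator_const (1:ℝ) (hAmeas i t), measureReal_def, hdist i t ht, smul_eq_mul, mul_one,
          ENNReal.toReal_ofReal (hp_nonneg i t ht)]
      have hXsq : ∀ i, (X i) ^ 2 = X i := by
        intro i
        funext ω
        by_cases hmem : ω ∈ A i t <;>
          simp [hX, Set.indicator_of_mem, Set.indicator_of_notMem, hmem]
      have hXvar : ∀ i, variance (X i) P ≤ p i t := by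
        intro i
        have h1 := variance_le_expectation_sq (μ := P) (hXmeas i).aestronglyMeasurable
        rwa [hXsq i, hXexp i] at h1
      have hindepX : ∀ i j, i ≠ j → IndepFun (X i) (X j) P := by
        have hg : Measurable fun x : ℝ≥0∞ =>
            (Set.Iic (ENNReal.ofReal t)).indicator (fun _ => (1:ℝ)) x :=
          measurable_const.indicator measurableSet_Iic
        have hcomp := hindep.comp (fun _ => fun x : ℝ≥0∞ =>
          (Set.Iic (ENNReal.ofReal t)).indicator (fun _ => (1:ℝ)) x) (fun _ => hg)
        have hXeq' : X = fun i => (fun x : ℝ≥0∞ =>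
            (Set.Iic (ENNReal.ofReal t)).indicator (fun _ => (1:ℝ)) x) ∘ Z i := by
          funext i ω
          simp only [hX, Function.comp_apply, Set.indicator_apply, Set.mem_Iic, hA,
            Set.mem_setOf_eq]
        rw [hXeq']
        intro i j hij
        exact hcomp.indepFun hij
      set S : ℕ → Ω → ℝ := fun n ω => ∑ i ∈ Finset.range n, X i ω with hS
      have hSmem : ∀ n, MemLp (S n) 2 P := by
        intro n
        have h1 := memLp_finset_sum' (μ := P) (p := 2) (Finset.range n) (fun i _ => hXmem i)
        have he : S n = ∑ i ∈ Finset.range n, X i := by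
          funext ω
          simp [hS, Finset.sum_apply]
        rw [he]
        exact h1
      have hSexp : ∀ n, ∫ ω, S n ω ∂P = ∑ i ∈ Finset.range n, p i t := by
        intro n
        rw [hS]
        simp only []
        rw [integral_finset_sum _ (fun i _ => (hXmem i).integrable one_le_two)]
        exact Finset.sum_congr rfl fun i _ => hXexp i
      have hSexp_le : ∀ n, ∫ ω, S n ω ∂P ≤ M t := by
        intro n
        rw [hSexp n]
        exact Summable.sum_le_tsum _ (fun i _ => hp_nonneg i t ht) (hp_summ t ht)
      have hSvar : ∀ n, variance (S n) P ≤ M t := by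
        intro n
        have h1 : variance (S n) P = ∑ i ∈ Finset.range n, variance (X i) P := by
          have h2 := IndepFun.variance_sum (μ := P) (s := Finset.range n)
            (fun i _ => hXmem i) (fun i _ j _ hij => hindepX i j hij)
          have he : S n = ∑ i ∈ Finset.range n, X i := by
            funext ω
            simp [hS, Finset.sum_apply]
          rw [he]
          exact h2
        rw [h1]
        calc ∑ i ∈ Finset.range n, variance (X i) P ≤ ∑ i ∈ Finset.range n, p i t :=
              Finset.sum_le_sum fun i _ => hXvar i
          _ ≤ M t := Summable.sum_le_tsum _ (fun i _ => hp_nonneg i t ht) (hp_summ t ht)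
      have hcheb_n : ∀ (n : ℕ) (c : ℝ), 0 < c →
          P {ω | c ≤ |S n ω - ∫ ω', S n ω' ∂P|} ≤ ENNReal.ofReal (M t / c^2) := by
        intro n c hc
        calc P {ω | c ≤ |S n ω - ∫ ω', S n ω' ∂P|}
            ≤ ENNReal.ofReal (variance (S n) P / c^2) := meas_ge_le_variance_div_sq (hSmem n) hc
          _ ≤ ENNReal.ofReal (M t / c^2) := by
              apply ENNReal.ofReal_le_ofReal
              gcongr
              exact hSvar n
      have hWiSup : ∀ ω, W t ω = ⨆ n, ENNReal.ofReal (S n ω) := by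
        intro ω
        rw [hW, ENNReal.tsum_eq_iSup_nat]
        congr 1
        funext n
        symm
        rw [hS]
        simp only []
        rw [ENNReal.ofReal_sum_of_nonneg (fun i _ => hXnonneg i ω)]
        refine Finset.sum_congr rfl fun i _ => ?_
        by_cases hmem : ω ∈ A i t <;>
          simp +zetaDelta [hX, Set.indicator_of_mem, Set.indicator_of_notMem, hmem]
      have hSmono : ∀ ω, Monotone (fun n => S n ω) := by
        intro ω a b hab
        exact Finset.sum_le_sum_of_subset_of_nonneg (Finset.range_subset_range.2 hab)
          (fun i _ _ => hXnonneg i ω)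
      constructor
      · have hset : {ω | ENNReal.ofReal ((1+ε) * M t) < W t ω}
            = ⋃ n, {ω | (1+ε) * M t < S n ω} := by
          ext ω
          simp only [Set.mem_setOf_eq, Set.mem_iUnion, hWiSup ω, lt_iSup_iff]
          constructor
          · rintro ⟨n, hn⟩
            refine ⟨n, ?_⟩
            by_contra hc
            push_neg at hc
            exact absurd (ENNReal.ofReal_le_ofReal hc) (not_le.2 hn)
          · rintro ⟨n, hn⟩
            exact ⟨n, (ENNReal.ofReal_lt_ofReal_iff_of_nonneg (by positivity)).2 hn⟩
        have hdir : Directed (· ⊆ ·) (fun n => {ω | (1+ε) * M t < S n ω}) := by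
          have hmono : Monotone (fun n => {ω | (1+ε) * M t < S n ω}) :=
            fun a b hab ω hω => lt_of_lt_of_le hω (hSmono ω hab)
          exact hmono.directed_le
        rw [hset, hdir.measure_iUnion]
        refine iSup_le fun n => ?_
        have hsub : {ω | (1+ε) * M t < S n ω}
            ⊆ {ω | ε * M t ≤ |S n ω - ∫ ω', S n ω' ∂P|} := by
          intro ω hω
          simp only [Set.mem_setOf_eq] at hω ⊢
          have h1 := hSexp_le n
          have h2 : ε * M t ≤ S n ω - ∫ ω', S n ω' ∂P := by nlinarith
          exact h2.trans (le_abs_self _)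
        calc P {ω | (1+ε) * M t < S n ω}
            ≤ P {ω | ε * M t ≤ |S n ω - ∫ ω', S n ω' ∂P|} := measure_mono hsub
          _ ≤ ENNReal.ofReal (M t / (ε * M t)^2) := hcheb_n n _ (by positivity)
          _ = ENNReal.ofReal (1 / (ε^2 * M t)) := by
              congr 1
              field_simp
      · have hev : ∀ᶠ n in atTop, (1 - ε/2) * M t ≤ ∑ i ∈ Finset.range n, p i t := by
          have hlt : (1 - ε/2) * M t < M t := by nlinarith
          exact (hM_partial t ht).eventually_const_le hlt
        obtain ⟨n₀, hn₀⟩ := hev.exists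
        have hsub : {ω | W t ω < ENNReal.ofReal ((1-ε) * M t)}
            ⊆ {ω | ε/2 * M t ≤ |S n₀ ω - ∫ ω', S n₀ ω' ∂P|} := by
          intro ω hω
          simp only [Set.mem_setOf_eq] at hω ⊢
          have h0 : ENNReal.ofReal (S n₀ ω) ≤ W t ω := by
            rw [hWiSup ω]
            exact le_iSup (fun n => ENNReal.ofReal (S n ω)) n₀
          have h1 : S n₀ ω < (1-ε) * M t := by
            by_contra hc
            push_neg at hc
            exact absurd ((ENNReal.ofReal_le_ofReal hc).trans h0) (not_le.2 hω)
          have h2 : (1 - ε/2) * M t ≤ ∫ ω', S n₀ ω' ∂P := by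
            rw [hSexp n₀]
            exact hn₀
          have h3 : ε/2 * M t ≤ (∫ ω', S n₀ ω' ∂P) - S n₀ ω := by nlinarith
          calc ε/2 * M t ≤ (∫ ω', S n₀ ω' ∂P) - S n₀ ω := h3
            _ ≤ |(∫ ω', S n₀ ω' ∂P) - S n₀ ω| := le_abs_self _
            _ = |S n₀ ω - ∫ ω', S n₀ ω' ∂P| := abs_sub_comm _ _
        calc P {ω | W t ω < ENNReal.ofReal ((1-ε) * M t)}
            ≤ P {ω | ε/2 * M t ≤ |S n₀ ω - ∫ ω', S n₀ ω' ∂P|} := measure_mono hsub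
          _ ≤ ENNReal.ofReal (M t / (ε/2 * M t)^2) := hcheb_n n₀ _ (by positivity)
          _ = ENNReal.ofReal (4 / (ε^2 * M t)) := by
              congr 1
              field_simp
              ring
    have hMu_pos : ∀ k : ℕ, 0 < M (u k) := by
      intro k
      rw [huM]
      positivity
    set ej : ℕ → ℝ := fun j => 1/((j:ℝ)+2) with hej
    have hej_pos : ∀ j, 0 < ej j := by
      intro j
      have : (0:ℝ) < (j:ℝ)+2 := by positivity
      positivity
    have hej_lt1 : ∀ j, ej j < 1 := by
      intro j
      rw [hej]
      rw [div_lt_one (by positivity)]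
      have : (0:ℝ) ≤ (j:ℝ) := Nat.cast_nonneg j
      linarith
    have hsummable : Summable (fun k : ℕ => 1/((k:ℝ)+1)^2) := by
      have h1 : Summable (fun n : ℕ => 1/(n:ℝ)^2) := by
        simpa using Real.summable_one_div_nat_pow.mpr (le_refl 2)
      have h2 := (summable_nat_add_iff 1).mpr h1
      refine h2.congr fun k => ?_
      push_cast
      ring
    have hBC : ∀ᵐ ω ∂P, ∀ j : ℕ, ∀ᶠ k : ℕ in atTop,
        W (u k) ω ≤ ENNReal.ofReal ((1 + ej j) * M (u k)) ∧
        ENNReal.ofReal ((1 - ej j) * M (u k)) ≤ W (u k) ω := by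
      rw [ae_all_iff]
      intro j
      set Bk : ℕ → Set Ω := fun k =>
        {ω | ENNReal.ofReal ((1 + ej j) * M (u k)) < W (u k) ω} ∪
        {ω | W (u k) ω < ENNReal.ofReal ((1 - ej j) * M (u k))} with hBk
      have hbound : ∀ k, P (Bk k) ≤ ENNReal.ofReal ((5/(ej j)^2) * (1/((k:ℝ)+1)^2)) := by
        intro k
        obtain ⟨hc1, hc2⟩ := hcheb (u k) (hu0 k) (hMu_pos k) (ej j) (hej_pos j) (hej_lt1 j)
        calc P (Bk k) ≤ _ + _ := measure_union_le _ _
          _ ≤ ENNReal.ofReal (1 / ((ej j)^2 * M (u k)))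
              + ENNReal.ofReal (4 / ((ej j)^2 * M (u k))) := add_le_add hc1 hc2
          _ = ENNReal.ofReal ((5/(ej j)^2) * (1/((k:ℝ)+1)^2)) := by
              have hMk := hMu_pos k
              have hejj := hej_pos j
              rw [← ENNReal.ofReal_add
                (le_of_lt (div_pos one_pos (mul_pos (pow_pos hejj 2) hMk)))
                (le_of_lt (div_pos (by norm_num) (mul_pos (pow_pos hejj 2) hMk)))]
              congr 1
              rw [huM k]
              have h1 : ((k:ℝ)+1)^2 ≠ 0 := by positivity
              have h2 : (ej j) ≠ 0 := (hej_pos j).ne'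
              field_simp
              ring
      have htsum : ∑' k, P (Bk k) ≠ ∞ := by
        refine ne_top_of_le_ne_top ?_ (ENNReal.tsum_le_tsum hbound)
        rw [← ENNReal.ofReal_tsum_of_nonneg (fun k => by positivity)
          (hsummable.mul_left (5/(ej j)^2))]
        exact ENNReal.ofReal_ne_top
      filter_upwards [ae_eventually_notMem htsum] with ω hω
      filter_upwards [hω] with k hk
      rw [hBk] at hk
      simp only [Set.mem_union, Set.mem_setOf_eq, not_or, not_lt] at hk
      exact ⟨hk.1, hk.2⟩
    filter_upwards [hBC] with ω hω
    rw [ENNReal.tendsto_nhds ENNReal.one_ne_top]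
    intro δ hδ
    obtain ⟨ε', hε'0, hε'1, hε'δ⟩ : ∃ ε' : ℝ, 0 < ε' ∧ ε' < 1 ∧ ENNReal.ofReal ε' ≤ δ := by
      rcases le_or_gt 1 δ with hδ1 | hδ1
      · refine ⟨1/2, by norm_num, by norm_num, le_trans ?_ hδ1⟩
        rw [ENNReal.ofReal_le_one]
        norm_num
      · have hδtop : δ ≠ ⊤ := (hδ1.trans_le le_top).ne
        have htR : 0 < δ.toReal := ENNReal.toReal_pos hδ.ne' hδtop
        have htR1 : δ.toReal < 1 := by
          rw [← ENNReal.toReal_one]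
          exact ENNReal.toReal_strict_mono ENNReal.one_ne_top hδ1
        refine ⟨δ.toReal/2, by positivity, by linarith, ?_⟩
        calc ENNReal.ofReal (δ.toReal/2) ≤ ENNReal.ofReal δ.toReal :=
              ENNReal.ofReal_le_ofReal (by linarith)
          _ = δ := ENNReal.ofReal_toReal hδtop
    obtain ⟨j, hjlt⟩ : ∃ j : ℕ, ej j < ε' := by
      obtain ⟨j, hj⟩ := exists_nat_gt (1/ε')
      refine ⟨j, ?_⟩
      rw [div_lt_iff₀ hε'0] at hj
      calc ej j = 1/((j:ℝ)+2) := rfl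
        _ < ε' := by
            rw [div_lt_iff₀ (by positivity)]
            nlinarith [(Nat.cast_nonneg j : (0:ℝ) ≤ (j:ℝ))]
    have hratio : Tendsto (fun k : ℕ => ((k:ℝ)+2)^2/((k:ℝ)+1)^2) atTop (nhds 1) := by
      have h0 : Tendsto (fun k : ℕ => 1/((k:ℝ)+1)) atTop (nhds 0) :=
        tendsto_one_div_add_atTop_nhds_zero_nat
      have h1 : Tendsto (fun k : ℕ => (1 + 1/((k:ℝ)+1))^2) atTop (nhds 1) := by
        have := (tendsto_const_nhds (x := (1:ℝ)) (f := atTop)).add h0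
        have h2 := this.pow 2
        simpa using h2
      refine h1.congr fun k => ?_
      have hne : ((k:ℝ)+1) ≠ 0 := by positivity
      field_simp
      ring
    have hak : ∀ᶠ k : ℕ in atTop, (1 + ej j) * (((k:ℝ)+2)^2/((k:ℝ)+1)^2) ≤ 1 + ε' := by
      have h1 : Tendsto (fun k : ℕ => (1 + ej j) * (((k:ℝ)+2)^2/((k:ℝ)+1)^2)) atTop
          (nhds (1 + ej j)) := by
        simpa using (tendsto_const_nhds (x := 1 + ej j) (f := atTop)).mul hratio
      exact h1.eventually_le_const (by linarith)
    have hbk : ∀ᶠ k : ℕ in atTop, 1 - ε' ≤ (1 - ej j) * (((k:ℝ)+1)^2/((k:ℝ)+2)^2) := by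
      have hratio' : Tendsto (fun k : ℕ => ((k:ℝ)+1)^2/((k:ℝ)+2)^2) atTop (nhds 1) := by
        have h2 := hratio.inv₀ one_ne_zero
        simp only [inv_one] at h2
        refine h2.congr fun k => ?_
        rw [inv_div]
      have h1 : Tendsto (fun k : ℕ => (1 - ej j) * (((k:ℝ)+1)^2/((k:ℝ)+2)^2)) atTop
          (nhds (1 - ej j)) := by
        simpa using (tendsto_const_nhds (x := 1 - ej j) (f := atTop)).mul hratio'
      exact h1.eventually_const_le (by linarith)
    obtain ⟨K, hK⟩ := eventually_atTop.1 ((hω j).and (hak.and hbk))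
    filter_upwards [eventually_ge_atTop (u K)] with t htK
    have ht0 : 0 ≤ t := (hu0 K).trans htK
    obtain ⟨N, hNt⟩ := (hutop.eventually_gt_atTop t).exists
    have hKN : K < N := by
      have := htK.trans_lt hNt
      exact hustrict.lt_iff_lt.1 this
    set k := Nat.findGreatest (fun k' => u k' ≤ t) N with hkdef
    have hkK : K ≤ k := Nat.le_findGreatest (P := fun k' => u k' ≤ t) hKN.le htK
    have hk1 : u k ≤ t := Nat.findGreatest_spec (P := fun k' => u k' ≤ t) hKN.le htK
    have hkN : k < N := by
      have hle : k ≤ N := Nat.findGreatest_le N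
      rcases hle.lt_or_eq with h | h
      · exact h
      · exfalso
        rw [h] at hk1
        exact absurd hk1 (not_le.2 hNt)
    have hk2 : t < u (k+1) := by
      by_contra hc
      push_neg at hc
      exact Nat.findGreatest_is_greatest (P := fun k' => u k' ≤ t) (Nat.lt_succ_self k) hkN hc
    obtain ⟨⟨hgk1, hgk2⟩, hgk3, hgk4⟩ := hK k hkK
    obtain ⟨⟨hgk1', hgk2'⟩, _, _⟩ := hK (k+1) (hkK.trans (Nat.le_succ k))
    have hMk1 : M (u (k+1)) = ((k:ℝ)+2)^2 := by
      rw [huM]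
      push_cast
      ring_nf
    have hmt_lo : ENNReal.ofReal (M (u k)) ≤ ∫⁻ ω', W t ω' ∂P := by
      rw [← hmM (u k) (hu0 k)]
      exact hm_mono hk1
    have hmt_hi : ∫⁻ ω', W t ω' ∂P ≤ ENNReal.ofReal (M (u (k+1))) := by
      rw [← hmM (u (k+1)) (hu0 (k+1))]
      exact hm_mono hk2.le
    constructor
    · -- lower bound
      have h1 : ENNReal.ofReal ((1 - ej j) * M (u k)) / ENNReal.ofReal (M (u (k+1)))
          ≤ W t ω / ∫⁻ ω', W t ω' ∂P := by
        exact ENNReal.div_le_div (hgk2.trans (hWmono ω hk1)) hmt_hi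
      have h2 : ENNReal.ofReal ((1 - ej j) * M (u k)) / ENNReal.ofReal (M (u (k+1)))
          = ENNReal.ofReal ((1 - ej j) * (((k:ℝ)+1)^2/((k:ℝ)+2)^2)) := by
        rw [← ENNReal.ofReal_div_of_pos (by rw [hMk1]; positivity)]
        congr 1
        rw [huM k, hMk1]
        ring
      have h3 : (1:ℝ≥0∞) - δ ≤ ENNReal.ofReal ((1 - ej j) * (((k:ℝ)+1)^2/((k:ℝ)+2)^2)) := by
        calc (1:ℝ≥0∞) - δ ≤ 1 - ENNReal.ofReal ε' := tsub_le_tsub_left hε'δ 1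
          _ = ENNReal.ofReal (1 - ε') := by
              rw [← ENNReal.ofReal_one, ENNReal.ofReal_sub 1 hε'0.le]
          _ ≤ _ := ENNReal.ofReal_le_ofReal hgk4
      calc (1:ℝ≥0∞) - δ ≤ _ := h3
        _ = _ := h2.symm
        _ ≤ _ := h1
    · -- upper bound
      have h1 : W t ω / ∫⁻ ω', W t ω' ∂P
          ≤ ENNReal.ofReal ((1 + ej j) * M (u (k+1))) / ENNReal.ofReal (M (u k)) :=
        ENNReal.div_le_div ((hWmono ω hk2.le).trans hgk1') hmt_lo
      have h2 : ENNReal.ofReal ((1 + ej j) * M (u (k+1))) / ENNReal.ofReal (M (u k))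
          = ENNReal.ofReal ((1 + ej j) * (((k:ℝ)+2)^2/((k:ℝ)+1)^2)) := by
        rw [← ENNReal.ofReal_div_of_pos (hMu_pos k)]
        congr 1
        rw [huM k, hMk1]
        ring
      have h3 : ENNReal.ofReal ((1 + ej j) * (((k:ℝ)+2)^2/((k:ℝ)+1)^2)) ≤ 1 + δ := by
        calc ENNReal.ofReal ((1 + ej j) * (((k:ℝ)+2)^2/((k:ℝ)+1)^2))
            ≤ ENNReal.ofReal (1 + ε') := ENNReal.ofReal_le_ofReal hgk3
          _ = 1 + ENNReal.ofReal ε' := by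
              rw [ENNReal.ofReal_add (by norm_num) hε'0.le, ENNReal.ofReal_one]
          _ ≤ 1 + δ := add_le_add_right hε'δ 1
      calc W t ω / ∫⁻ ω', W t ω' ∂P ≤ _ := h1
        _ = _ := h2
        _ ≤ 1 + δ := h3

  · -- L finite
    have hLne0 : L ≠ 0 := by
      intro h0
      rw [hL, ENNReal.tsum_eq_zero] at h0
      have hall : ∀ i, lam i = 0 := by
        intro i
        by_contra hne
        have hpi : 0 < lam i := lt_of_le_of_ne (hlam i) (Ne.symm hne)
        simpa [hpi] using h0 i
      have : (fun i => lam i) = fun _ => (0:ℝ) := funext hall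
      rw [this] at hpos
      simp at hpos
    filter_upwards [part2] with ω hω
    have hmul := ENNReal.Tendsto.div hω (Or.inl hLne0) part1 (Or.inl hLtop)
    rw [ENNReal.div_self hLne0 hLtop] at hmul
    exact hmul
end

section
/- Let $(I_{ij})_{i,j=1}^N$ (with $N \le \infty$) be a symmetric array of random indicator variables such that the family $\{I_{ij}\}_{i \le j}$ is independent. Let $I_i := \max_j I_{ij}$ and $W := \sum_i I_i$. Then $\mathrm{Var}(W) \le 2\, \mathbb{E} W$. -/
open MeasureTheory ProbabilityTheory
open scoped ENNReal

/-- For a symmetric array of independent (over `i ≤ j`) indicator events `A i j`,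
`Iᵢ := max_j I_{ij}` (indicator of `⋃ j, A i j`) and `W := ∑ᵢ Iᵢ`, we have
`Var W ≤ 2 E W`, expressed as `E[W²] ≤ (E W)² + 2 E W`. -/
theorem stmt6 {Ω : Type*} [MeasurableSpace Ω] (P : Measure Ω) [IsProbabilityMeasure P]
    (A : ℕ → ℕ → Set Ω) (hAmeas : ∀ i j, MeasurableSet (A i j))
    (hsymm : ∀ i j, A i j = A j i)
    (hindep : iIndepSet (fun p : {p : ℕ × ℕ // p.1 ≤ p.2} => A p.1.1 p.1.2) P) :
    (∫⁻ ω, (∑' i, Set.indicator (⋃ j, A i j) (fun _ => (1:ℝ≥0∞)) ω) ^ 2 ∂P)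
      ≤ (∫⁻ ω, (∑' i, Set.indicator (⋃ j, A i j) (fun _ => (1:ℝ≥0∞)) ω) ∂P) ^ 2
        + 2 * ∫⁻ ω, (∑' i, Set.indicator (⋃ j, A i j) (fun _ => (1:ℝ≥0∞)) ω) ∂P := by
  classical
  -- Notation
  set B : ℕ → Set Ω := fun i => ⋃ j, A i j with hBdef
  have hB : ∀ i, MeasurableSet (B i) := fun i => MeasurableSet.iUnion fun j => hAmeas i j
  set C : ℕ → ℕ → Set Ω := fun i j => ⋃ k ∈ {k : ℕ | k ≠ j}, A i k with hCdef
  have hC : ∀ i j, MeasurableSet (C i j) :=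
    fun i j => MeasurableSet.biUnion (Set.to_countable _) fun k _ => hAmeas i k
  set D : ℕ → ℕ → Set Ω := fun i j => A i j \ C i j with hDdef
  have hD : ∀ i j, MeasurableSet (D i j) := fun i j => (hAmeas i j).diff (hC i j)
  set f : ℕ → ℝ≥0∞ := fun i => P (B i) with hfdef
  -- pair map
  have le_of_not : ∀ {a b : ℕ}, ¬ a ≤ b → b ≤ a := fun h => le_of_not_ge h
  set q : ℕ → ℕ → {p : ℕ × ℕ // p.1 ≤ p.2} := fun i k =>
    if h : i ≤ k then ⟨(i, k), h⟩ else ⟨(k, i), le_of_not h⟩ with hqdef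
  have hq : ∀ i k, A (q i k).1.1 (q i k).1.2 = A i k := by
    intro i k
    by_cases h : i ≤ k
    · simp [hqdef, h]
    · simp [hqdef, h, hsymm k i]
  -- independence of `C i j` and `B j` for `i ≠ j`
  have hkey : ∀ i j, i ≠ j → P (C i j ∩ B j) = P (C i j) * P (B j) := by
    intro i j hij
    have hdisj : Disjoint {p : {p : ℕ × ℕ // p.1 ≤ p.2} | ∃ k, k ≠ j ∧ q i k = p}
        (Set.range (q j)) := by
      rw [Set.disjoint_left]
      rintro p ⟨k, hk, rfl⟩ ⟨l, hl⟩
      have h2 : (q j l).1 = (q i k).1 := by rw [hl]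
      simp only [hqdef] at h2
      split_ifs at h2 <;> simp_all [Prod.ext_iff]
    have hind := (hindep.indep_generateFrom_of_disjoint (fun p => hAmeas p.1.1 p.1.2)
      {p | ∃ k, k ≠ j ∧ q i k = p} (Set.range (q j)) hdisj)
    have hmC : MeasurableSet[MeasurableSpace.generateFrom
        {t | ∃ n ∈ {p : {p : ℕ × ℕ // p.1 ≤ p.2} | ∃ k, k ≠ j ∧ q i k = p},
          A n.1.1 n.1.2 = t}] (C i j) := by
      refine MeasurableSet.biUnion (Set.to_countable _) fun k hk => ?_
      exact MeasurableSpace.measurableSet_generateFrom ⟨q i k, ⟨k, hk, rfl⟩, hq i k⟩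
    have hmB : MeasurableSet[MeasurableSpace.generateFrom
        {t | ∃ n ∈ Set.range (q j), A n.1.1 n.1.2 = t}] (B j) := by
      refine MeasurableSet.iUnion fun l => ?_
      exact MeasurableSpace.measurableSet_generateFrom ⟨q j l, ⟨l, rfl⟩, hq j l⟩
    exact (hind.indepSet_of_measurableSet hmC hmB).measure_inter_eq_mul
  -- pointwise bound on P (B i ∩ B j)
  set g : ℕ → ℕ → ℝ≥0∞ := fun i j => if j = i then f i else P (D i j) with hgdef
  have hpoint : ∀ i j, P (B i ∩ B j) ≤ g i j + f i * f j := by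
    intro i j
    rcases eq_or_ne j i with rfl | hji
    · simp only [hgdef, if_pos rfl, Set.inter_self]
      exact le_add_of_le_of_nonneg le_rfl zero_le
    · have hij : i ≠ j := fun h => hji h.symm
      have hsub : B i ∩ B j ⊆ D i j ∪ (C i j ∩ B j) := by
        rintro ω ⟨hωi, hωj⟩
        by_cases hc : ω ∈ C i j
        · exact Or.inr ⟨hc, hωj⟩
        · left
          refine ⟨?_, hc⟩
          obtain ⟨_, ⟨k, rfl⟩, hωk⟩ := hωi
          rcases eq_or_ne k j with rfl | hkj
          · exact hωk
          · exact absurd (show ω ∈ C i j from Set.mem_biUnion hkj hωk) hc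
      calc P (B i ∩ B j) ≤ P (D i j ∪ (C i j ∩ B j)) := measure_mono hsub
        _ ≤ P (D i j) + P (C i j ∩ B j) := measure_union_le _ _
        _ = P (D i j) + P (C i j) * P (B j) := by rw [hkey i j hij]
        _ ≤ P (D i j) + P (B i) * P (B j) := by
            gcongr
            exact Set.iUnion₂_subset fun k _ => Set.subset_iUnion (A i) k
        _ = g i j + f i * f j := by rw [hgdef]; simp [hji]; rfl
  -- the D i j are pairwise disjoint in j, all inside B i
  have hDsum : ∀ i, (∑' j, P (D i j)) ≤ f i := by
    intro i
    have hdisj : Pairwise (Function.onFun Disjoint (D i)) := by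
      intro j k hjk
      refine Set.disjoint_left.2 fun ω hωj hωk => ?_
      exact hωj.2 (Set.mem_biUnion (fun h : k = j => hjk h.symm) hωk.1)
    rw [← measure_iUnion hdisj (fun j => hD i j)]
    exact measure_mono (Set.iUnion_subset fun j => (Set.diff_subset).trans
      (Set.subset_iUnion (A i) j))
  have hgsum : ∀ i, (∑' j, g i j) ≤ 2 * f i := by
    intro i
    have h1 : g i i = f i := by simp [hgdef]
    rw [ENNReal.tsum_eq_add_tsum_ite i, h1, two_mul]
    refine add_le_add_right (le_trans (ENNReal.tsum_le_tsum fun j => ?_) (hDsum i)) _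
    by_cases h : j = i <;> simp [hgdef, h]
  -- compute the integrals
  have hEW : (∫⁻ ω, (∑' i, Set.indicator (⋃ j, A i j) (fun _ => (1:ℝ≥0∞)) ω) ∂P)
      = ∑' i, f i := by
    rw [lintegral_tsum fun i => ((measurable_const.indicator (hB i))).aemeasurable]
    exact tsum_congr fun i => lintegral_indicator_one (hB i)
  have hEW2 : (∫⁻ ω, (∑' i, Set.indicator (⋃ j, A i j) (fun _ => (1:ℝ≥0∞)) ω) ^ 2 ∂P)
      = ∑' i, ∑' j, P (B i ∩ B j) := by
    have hpt : ∀ ω, (∑' i, Set.indicator (⋃ j, A i j) (fun _ => (1:ℝ≥0∞)) ω) ^ 2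
        = ∑' i, ∑' j, Set.indicator (B i ∩ B j) (fun _ => (1:ℝ≥0∞)) ω := by
      intro ω
      rw [sq, ← ENNReal.tsum_mul_right]
      refine tsum_congr fun i => ?_
      rw [← ENNReal.tsum_mul_left]
      refine tsum_congr fun j => ?_
      have := congrFun (Set.inter_indicator_one (M₀ := ℝ≥0∞) (s := B i) (t := B j)) ω
      simpa [Pi.one_def] using this.symm
    simp_rw [hpt]
    rw [lintegral_tsum fun i => (Measurable.ennreal_tsum fun j =>
      measurable_const.indicator ((hB i).inter (hB j))).aemeasurable]
    refine tsum_congr fun i => ?_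
    rw [lintegral_tsum fun j =>
      (measurable_const.indicator ((hB i).inter (hB j))).aemeasurable]
    exact tsum_congr fun j => lintegral_indicator_one ((hB i).inter (hB j))
  rw [hEW, hEW2]
  calc (∑' i, ∑' j, P (B i ∩ B j)) ≤ ∑' i, ∑' j, (g i j + f i * f j) :=
        ENNReal.tsum_le_tsum fun i => ENNReal.tsum_le_tsum fun j => hpoint i j
    _ = ∑' i, ((∑' j, g i j) + f i * ∑' j, f j) := by
        refine tsum_congr fun i => ?_
        rw [ENNReal.tsum_add, ENNReal.tsum_mul_left]
    _ ≤ ∑' i, (2 * f i + f i * ∑' j, f j) := by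
        refine ENNReal.tsum_le_tsum fun i => ?_
        exact add_le_add_left (hgsum i) _
    _ = 2 * (∑' i, f i) + (∑' i, f i) * (∑' j, f j) := by
        rw [ENNReal.tsum_add, ENNReal.tsum_mul_left, ENNReal.tsum_mul_right]
    _ = (∑' i, f i) ^ 2 + 2 * (∑' i, f i) := by rw [sq]; ring
end

section
/- For distinct indices $i \ne j$, let $I_{ij} = I_{ji}$ be indicator variables with $\{I_{ij}\}_{i < j}$ independent, set $I_i := \max_j I_{ij}$ and $\bar I_{ij} := 1 - I_{ij}$, $q_{ij} := \mathbb{E}\bar I_{ij}$. Then for $i \ne j$, $\mathrm{Cov}(I_i, I_j) = q_{ij}(1 - q_{ij})\, \mathbb{E}\big[\prod_{k \ne j} \bar I_{ik} \prod_{k \ne i} \bar I_{jk}\big]$, and in particular $\mathrm{Cov}(I_i, I_j) \le \mathbb{P}\big(I_{ij} = 1 \text{ and } I_{ik} = 0 \text{ for all } k \ne j\big)$. -/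
open MeasureTheory ProbabilityTheory
open scoped ENNReal

/-- The finset of ordered pairs representing unordered pairs `{a, k}` with `k ∈ s`. -/
def Sfin (n : ℕ) (a : Fin n) (s : Finset (Fin n)) : Finset {p : Fin n × Fin n // p.1 < p.2} :=
  Finset.univ.filter (fun p => (p.1.1 = a ∧ p.1.2 ∈ s) ∨ (p.1.2 = a ∧ p.1.1 ∈ s))

lemma mem_Sfin {n : ℕ} {a : Fin n} {s : Finset (Fin n)} {p : {p : Fin n × Fin n // p.1 < p.2}} :
    p ∈ Sfin n a s ↔ (p.1.1 = a ∧ p.1.2 ∈ s) ∨ (p.1.2 = a ∧ p.1.1 ∈ s) := by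
  simp [Sfin]

lemma iInter_Sfin {Ω : Type*} {n : ℕ} (A : Fin n → Fin n → Set Ω)
    (hsymm : ∀ i j, A i j = A j i) (hdiag : ∀ i, A i i = ∅)
    (a : Fin n) (s : Finset (Fin n)) :
    ⋂ p ∈ Sfin n a s, (A p.1.1 p.1.2)ᶜ = ⋂ k ∈ s, (A a k)ᶜ := by
  ext ω
  simp only [Set.mem_iInter, Set.mem_compl_iff, mem_Sfin]
  constructor
  · intro h k hk
    rcases lt_trichotomy a k with hlt | heq | hgt
    · exact h ⟨(a, k), hlt⟩ (Or.inl ⟨rfl, hk⟩)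
    · subst heq; rw [hdiag]; exact Set.notMem_empty ω
    · have := h ⟨(k, a), hgt⟩ (Or.inr ⟨rfl, hk⟩)
      rw [hsymm]; exact this
  · rintro h p (⟨h1, h2⟩ | ⟨h1, h2⟩)
    · rw [h1]; exact h _ h2
    · rw [hsymm, h1]; exact h _ h2

lemma prod_indicator_eq {Ω : Type*} {n : ℕ} (s : Finset (Fin n)) (C : Fin n → Set Ω) (ω : Ω) :
    ∏ k ∈ s, (C k).indicator (fun _ => (1:ℝ)) ω
      = (⋂ k ∈ s, C k).indicator (fun _ => (1:ℝ)) ω := by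
  classical
  by_cases h : ω ∈ ⋂ k ∈ s, C k
  · rw [Set.indicator_of_mem h]
    exact Finset.prod_eq_one fun k hk =>
      Set.indicator_of_mem (by exact Set.mem_iInter₂.1 h k hk) _
  · rw [Set.indicator_of_notMem h]
    obtain ⟨k, hk, hkC⟩ : ∃ k ∈ s, ω ∉ C k := by
      simpa using h
    exact Finset.prod_eq_zero hk (Set.indicator_of_notMem hkC _)

lemma int_ind {Ω : Type*} [MeasurableSpace Ω] (P : Measure Ω) [IsProbabilityMeasure P]
    {S : Set Ω} (hS : MeasurableSet S) :
    ∫ ω, S.indicator (fun _ => (1:ℝ)) ω ∂P = (P S).toReal :=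
  integral_indicator_one hS

lemma toReal_prob_le_one {Ω : Type*} [MeasurableSpace Ω] (P : Measure Ω)
    [IsProbabilityMeasure P] (S : Set Ω) : (P S).toReal ≤ 1 := by
  calc (P S).toReal ≤ (P Set.univ).toReal :=
        ENNReal.toReal_mono (measure_ne_top P _) (measure_mono (Set.subset_univ _))
  _ = 1 := by simp

lemma ind_mul_ind {Ω : Type*} (S T : Set Ω) (ω : Ω) :
    S.indicator (fun _ => (1:ℝ)) ω * T.indicator (fun _ => (1:ℝ)) ω
      = (S ∩ T).indicator (fun _ => (1:ℝ)) ω := by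
  by_cases hS : ω ∈ S <;> by_cases hT : ω ∈ T <;>
    simp [Set.indicator_apply, hS, hT, Set.mem_inter_iff]

lemma finset_biInter_union {α β : Type*} [DecidableEq α] (s t : Finset α) (f : α → Set β) :
    ⋂ x ∈ s ∪ t, f x = (⋂ x ∈ s, f x) ∩ ⋂ x ∈ t, f x := by
  ext ω; simp [Finset.mem_union, or_imp, forall_and]

/-- covariance identity and bound for `Iᵢ = max_j I_{ij}` built from a symmetric
array of independent indicators (events `A i j`, empty on the diagonal). -/
theorem stmt7 {Ω : Type*} [MeasurableSpace Ω] (P : Measure Ω) [IsProbabilityMeasure P]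
    {n : ℕ} (A : Fin n → Fin n → Set Ω)
    (hmeas : ∀ i j, MeasurableSet (A i j))
    (hsymm : ∀ i j, A i j = A j i) (hdiag : ∀ i, A i i = ∅)
    (hindep : iIndepSet (fun p : {p : Fin n × Fin n // p.1 < p.2} => A p.1.1 p.1.2) P)
    (i j : Fin n) (hij : i ≠ j)
    (χ : Fin n → Fin n → Ω → ℝ)
    (hχ : ∀ a b, χ a b = Set.indicator (A a b) (fun _ => (1:ℝ)))
    (Ind : Fin n → Ω → ℝ)
    (hInd : ∀ a, Ind a = Set.indicator (⋃ b, A a b) (fun _ => (1:ℝ)))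
    (q : ℝ) (hq : q = (P ((A i j)ᶜ)).toReal) :
    ((∫ ω, Ind i ω * Ind j ω ∂P) - (∫ ω, Ind i ω ∂P) * (∫ ω, Ind j ω ∂P)
      = q * (1 - q) *
        ∫ ω, (∏ k ∈ Finset.univ.erase j, (1 - χ i k ω)) *
             (∏ k ∈ Finset.univ.erase i, (1 - χ j k ω)) ∂P) ∧
    ((∫ ω, Ind i ω * Ind j ω ∂P) - (∫ ω, Ind i ω ∂P) * (∫ ω, Ind j ω ∂P)
      ≤ (P (A i j ∩ ⋂ k ∈ Finset.univ.erase j, (A i k)ᶜ)).toReal) := by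
  classical
  -- independence in product form
  have key : ∀ S : Finset {p : Fin n × Fin n // p.1 < p.2},
      P (⋂ p ∈ S, (A p.1.1 p.1.2)ᶜ) = ∏ p ∈ S, P ((A p.1.1 p.1.2)ᶜ) := by
    intro S
    exact ((iIndepSet_iff _ _).1 hindep) S
      (fun p _ => (MeasurableSpace.measurableSet_generateFrom (Set.mem_singleton _)).compl)
  -- orientation of the pair (i, j)
  obtain ⟨a, b, hab, habij⟩ : ∃ a b : Fin n, ∃ _ : a < b,
      (a = i ∧ b = j) ∨ (a = j ∧ b = i) := by
    rcases hij.lt_or_gt with h | h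
    · exact ⟨i, j, h, Or.inl ⟨rfl, rfl⟩⟩
    · exact ⟨j, i, h, Or.inr ⟨rfl, rfl⟩⟩
  have hAabij : A a b = A i j := by
    rcases habij with ⟨h1, h2⟩ | ⟨h1, h2⟩
    · rw [h1, h2]
    · rw [h1, h2, hsymm j i]
  have hAab : (P ((A a b)ᶜ)).toReal = q := by rw [hAabij, hq]
  -- arithmetic versions of the hypotheses, for omega
  have hijv : (i : ℕ) ≠ (j : ℕ) := by simpa [Fin.ext_iff] using hij
  have habv : ((a : ℕ) = i ∧ (b : ℕ) = j) ∨ ((a : ℕ) = j ∧ (b : ℕ) = i) := by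
    rcases habij with ⟨rfl, rfl⟩ | ⟨rfl, rfl⟩ <;> simp
  have habv' : (a : ℕ) < b := hab
  -- Finset identities
  have F1b : (⟨(a, b), hab⟩ : {p : Fin n × Fin n // p.1 < p.2}) ∉
      Sfin n i (Finset.univ.erase j) := by
    simp only [mem_Sfin, Finset.mem_erase, Finset.mem_univ, and_true, ne_eq, Fin.ext_iff]
    omega
  have F2b : (⟨(a, b), hab⟩ : {p : Fin n × Fin n // p.1 < p.2}) ∉
      Sfin n j (Finset.univ.erase i) := by
    simp only [mem_Sfin, Finset.mem_erase, Finset.mem_univ, and_true, ne_eq, Fin.ext_iff]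
    omega
  have F1 : Sfin n i Finset.univ = insert ⟨(a, b), hab⟩ (Sfin n i (Finset.univ.erase j)) := by
    ext p
    obtain ⟨⟨x, y⟩, hxy⟩ := p
    have hxy' : (x : ℕ) < y := hxy
    simp only [mem_Sfin, Finset.mem_insert, Finset.mem_erase, Finset.mem_univ, and_true,
      true_and, Subtype.mk.injEq, Prod.mk.injEq, ne_eq, Fin.ext_iff]
    omega
  have F2 : Sfin n j Finset.univ = insert ⟨(a, b), hab⟩ (Sfin n j (Finset.univ.erase i)) := by
    ext p
    obtain ⟨⟨x, y⟩, hxy⟩ := p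
    have hxy' : (x : ℕ) < y := hxy
    simp only [mem_Sfin, Finset.mem_insert, Finset.mem_erase, Finset.mem_univ, and_true,
      true_and, Subtype.mk.injEq, Prod.mk.injEq, ne_eq, Fin.ext_iff]
    omega
  have F3 : Disjoint (Sfin n i (Finset.univ.erase j)) (Sfin n j (Finset.univ.erase i)) := by
    rw [Finset.disjoint_left]
    intro p hp hp'
    obtain ⟨⟨x, y⟩, hxy⟩ := p
    have hxy' : (x : ℕ) < y := hxy
    simp only [mem_Sfin, Finset.mem_erase, Finset.mem_univ, and_true, ne_eq,
      Fin.ext_iff] at hp hp'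
    omega
  have F4 : Sfin n i Finset.univ ∪ Sfin n j Finset.univ
      = insert ⟨(a, b), hab⟩
          (Sfin n i (Finset.univ.erase j) ∪ Sfin n j (Finset.univ.erase i)) := by
    rw [F1, F2, Finset.insert_union, Finset.union_insert, Finset.insert_idem]
  have F4b : (⟨(a, b), hab⟩ : {p : Fin n × Fin n // p.1 < p.2}) ∉
      Sfin n i (Finset.univ.erase j) ∪ Sfin n j (Finset.univ.erase i) :=
    fun h => (Finset.mem_union.1 h).elim F1b F2b
  -- the real numbers
  set ρi := ∏ p ∈ Sfin n i (Finset.univ.erase j), (P ((A p.1.1 p.1.2)ᶜ)).toReal with hρi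
  set ρj := ∏ p ∈ Sfin n j (Finset.univ.erase i), (P ((A p.1.1 p.1.2)ᶜ)).toReal with hρj
  have hρi0 : 0 ≤ ρi := Finset.prod_nonneg fun p _ => ENNReal.toReal_nonneg
  have hρj0 : 0 ≤ ρj := Finset.prod_nonneg fun p _ => ENNReal.toReal_nonneg
  have hρj1 : ρj ≤ 1 :=
    Finset.prod_le_one (fun p _ => ENNReal.toReal_nonneg)
      (fun p _ => toReal_prob_le_one P _)
  have hq0 : 0 ≤ q := hq ▸ ENNReal.toReal_nonneg
  have hq1 : q ≤ 1 := hq ▸ toReal_prob_le_one P _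
  -- measure computations
  have HBi' : (P (⋂ k ∈ Finset.univ.erase j, (A i k)ᶜ)).toReal = ρi := by
    rw [← iInter_Sfin A hsymm hdiag i _, key, ENNReal.toReal_prod]
  have HBj' : (P (⋂ k ∈ Finset.univ.erase i, (A j k)ᶜ)).toReal = ρj := by
    rw [← iInter_Sfin A hsymm hdiag j _, key, ENNReal.toReal_prod]
  have HBi : (P (⋂ k ∈ (Finset.univ : Finset (Fin n)), (A i k)ᶜ)).toReal = q * ρi := by
    rw [← iInter_Sfin A hsymm hdiag i _, key, ENNReal.toReal_prod, F1,
      Finset.prod_insert F1b]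
    show (P ((A a b)ᶜ)).toReal
        * ∏ x ∈ Sfin n i (Finset.univ.erase j), (P ((A x.1.1 x.1.2)ᶜ)).toReal = q * ρi
    rw [hAab, ← hρi]
  have HBj : (P (⋂ k ∈ (Finset.univ : Finset (Fin n)), (A j k)ᶜ)).toReal = q * ρj := by
    rw [← iInter_Sfin A hsymm hdiag j _, key, ENNReal.toReal_prod, F2,
      Finset.prod_insert F2b]
    show (P ((A a b)ᶜ)).toReal
        * ∏ x ∈ Sfin n j (Finset.univ.erase i), (P ((A x.1.1 x.1.2)ᶜ)).toReal = q * ρj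
    rw [hAab, ← hρj]
  have HBij : (P ((⋂ k ∈ (Finset.univ : Finset (Fin n)), (A i k)ᶜ)
      ∩ ⋂ k ∈ (Finset.univ : Finset (Fin n)), (A j k)ᶜ)).toReal = q * (ρi * ρj) := by
    rw [← iInter_Sfin A hsymm hdiag i _, ← iInter_Sfin A hsymm hdiag j _,
      ← finset_biInter_union, key, ENNReal.toReal_prod, F4, Finset.prod_insert F4b,
      Finset.prod_union F3]
    show (P ((A a b)ᶜ)).toReal
        * ((∏ x ∈ Sfin n i (Finset.univ.erase j), (P ((A x.1.1 x.1.2)ᶜ)).toReal)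
          * ∏ x ∈ Sfin n j (Finset.univ.erase i), (P ((A x.1.1 x.1.2)ᶜ)).toReal)
        = q * (ρi * ρj)
    rw [hAab, ← hρi, ← hρj]
  have HBij' : (P ((⋂ k ∈ Finset.univ.erase j, (A i k)ᶜ)
      ∩ ⋂ k ∈ Finset.univ.erase i, (A j k)ᶜ)).toReal = ρi * ρj := by
    rw [← iInter_Sfin A hsymm hdiag i _, ← iInter_Sfin A hsymm hdiag j _,
      ← finset_biInter_union, key, ENNReal.toReal_prod, Finset.prod_union F3]
  -- measurability
  have hmBi : MeasurableSet (⋂ k ∈ (Finset.univ : Finset (Fin n)), (A i k)ᶜ) :=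
    Finset.measurableSet_biInter _ fun k _ => (hmeas i k).compl
  have hmBj : MeasurableSet (⋂ k ∈ (Finset.univ : Finset (Fin n)), (A j k)ᶜ) :=
    Finset.measurableSet_biInter _ fun k _ => (hmeas j k).compl
  have hmBi' : MeasurableSet (⋂ k ∈ Finset.univ.erase j, (A i k)ᶜ) :=
    Finset.measurableSet_biInter _ fun k _ => (hmeas i k).compl
  have hmBj' : MeasurableSet (⋂ k ∈ Finset.univ.erase i, (A j k)ᶜ) :=
    Finset.measurableSet_biInter _ fun k _ => (hmeas j k).compl
  have hUi : MeasurableSet (⋃ b, A i b) := MeasurableSet.iUnion fun b => hmeas i b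
  have hUj : MeasurableSet (⋃ b, A j b) := MeasurableSet.iUnion fun b => hmeas j b
  -- complements
  have compl_i : (⋃ b, A i b)ᶜ = ⋂ k ∈ (Finset.univ : Finset (Fin n)), (A i k)ᶜ := by
    ext ω; simp
  have compl_j : (⋃ b, A j b)ᶜ = ⋂ k ∈ (Finset.univ : Finset (Fin n)), (A j k)ᶜ := by
    ext ω; simp
  -- integrals as measures
  have I2 : ∫ ω, Ind i ω ∂P = (P (⋃ b, A i b)).toReal := by
    simp only [hInd]; exact int_ind P hUi
  have I2' : ∫ ω, Ind j ω ∂P = (P (⋃ b, A j b)).toReal := by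
    simp only [hInd]; exact int_ind P hUj
  have I1 : ∫ ω, Ind i ω * Ind j ω ∂P
      = (P ((⋃ b, A i b) ∩ ⋃ b, A j b)).toReal := by
    rw [← int_ind P (hUi.inter hUj)]
    apply integral_congr_ae
    filter_upwards with ω
    simp only [hInd]
    exact ind_mul_ind _ _ ω
  have I3 : ∫ ω, (∏ k ∈ Finset.univ.erase j, (1 - χ i k ω)) *
        (∏ k ∈ Finset.univ.erase i, (1 - χ j k ω)) ∂P
      = (P ((⋂ k ∈ Finset.univ.erase j, (A i k)ᶜ)
          ∩ ⋂ k ∈ Finset.univ.erase i, (A j k)ᶜ)).toReal := by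
    rw [← int_ind P (hmBi'.inter hmBj')]
    apply integral_congr_ae
    filter_upwards with ω
    have e1 : ∀ c k, (1 : ℝ) - χ c k ω = ((A c k)ᶜ).indicator (fun _ => (1:ℝ)) ω := by
      intro c k
      rw [hχ]
      by_cases h : ω ∈ A c k <;> simp [h]
    have P1 : (∏ k ∈ Finset.univ.erase j, (1 - χ i k ω))
        = (⋂ k ∈ Finset.univ.erase j, (A i k)ᶜ).indicator (fun _ => (1:ℝ)) ω := by
      rw [← prod_indicator_eq]
      exact Finset.prod_congr rfl fun k _ => e1 i k
    have P2 : (∏ k ∈ Finset.univ.erase i, (1 - χ j k ω))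
        = (⋂ k ∈ Finset.univ.erase i, (A j k)ᶜ).indicator (fun _ => (1:ℝ)) ω := by
      rw [← prod_indicator_eq]
      exact Finset.prod_congr rfl fun k _ => e1 j k
    rw [P1, P2]
    exact ind_mul_ind _ _ ω
  -- complement probabilities in ℝ
  have hc_i : (P (⋃ b, A i b)).toReal = 1 - q * ρi := by
    have h := measure_add_measure_compl hUi (μ := P)
    rw [compl_i, measure_univ] at h
    have h' : (P (⋃ b, A i b)).toReal
        + (P (⋂ k ∈ (Finset.univ : Finset (Fin n)), (A i k)ᶜ)).toReal = 1 := by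
      rw [← ENNReal.toReal_add (measure_ne_top P _) (measure_ne_top P _), h]
      simp
    rw [HBi] at h'
    linarith
  have hc_j : (P (⋃ b, A j b)).toReal = 1 - q * ρj := by
    have h := measure_add_measure_compl hUj (μ := P)
    rw [compl_j, measure_univ] at h
    have h' : (P (⋃ b, A j b)).toReal
        + (P (⋂ k ∈ (Finset.univ : Finset (Fin n)), (A j k)ᶜ)).toReal = 1 := by
      rw [← ENNReal.toReal_add (measure_ne_top P _) (measure_ne_top P _), h]
      simp
    rw [HBj] at h'
    linarith
  -- union / intersection bookkeeping for the main intersection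
  have compl_ij : ((⋃ b, A i b) ∩ ⋃ b, A j b)ᶜ
      = (⋂ k ∈ (Finset.univ : Finset (Fin n)), (A i k)ᶜ)
        ∪ ⋂ k ∈ (Finset.univ : Finset (Fin n)), (A j k)ᶜ := by
    rw [Set.compl_inter, compl_i, compl_j]
  have hunion : (P ((⋂ k ∈ (Finset.univ : Finset (Fin n)), (A i k)ᶜ)
        ∪ ⋂ k ∈ (Finset.univ : Finset (Fin n)), (A j k)ᶜ)).toReal
      + q * (ρi * ρj) = q * ρi + q * ρj := by
    have h := measure_union_add_inter (μ := P)
      (⋂ k ∈ (Finset.univ : Finset (Fin n)), (A i k)ᶜ) hmBj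
    have h' := congrArg ENNReal.toReal h
    rw [ENNReal.toReal_add (measure_ne_top P _) (measure_ne_top P _),
      ENNReal.toReal_add (measure_ne_top P _) (measure_ne_top P _), HBij, HBi, HBj] at h'
    linarith
  have hc_ij : (P ((⋃ b, A i b) ∩ ⋃ b, A j b)).toReal
      = 1 - (q * ρi + q * ρj - q * (ρi * ρj)) := by
    have h := measure_add_measure_compl (hUi.inter hUj) (μ := P)
    rw [compl_ij, measure_univ] at h
    have h' : (P ((⋃ b, A i b) ∩ ⋃ b, A j b)).toReal
        + (P ((⋂ k ∈ (Finset.univ : Finset (Fin n)), (A i k)ᶜ)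
          ∪ ⋂ k ∈ (Finset.univ : Finset (Fin n)), (A j k)ᶜ)).toReal = 1 := by
      rw [← ENNReal.toReal_add (measure_ne_top P _) (measure_ne_top P _), h]
      simp
    linarith
  -- first conjunct
  have main : (∫ ω, Ind i ω * Ind j ω ∂P) - (∫ ω, Ind i ω ∂P) * (∫ ω, Ind j ω ∂P)
      = q * (1 - q) *
        ∫ ω, (∏ k ∈ Finset.univ.erase j, (1 - χ i k ω)) *
             (∏ k ∈ Finset.univ.erase i, (1 - χ j k ω)) ∂P := by
    rw [I1, I2, I2', I3, HBij', hc_i, hc_j, hc_ij]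
    ring
  refine ⟨main, ?_⟩
  -- second conjunct
  have hsplit : (⋂ k ∈ Finset.univ.erase j, (A i k)ᶜ)
      = (A i j ∩ ⋂ k ∈ Finset.univ.erase j, (A i k)ᶜ)
        ∪ ⋂ k ∈ (Finset.univ : Finset (Fin n)), (A i k)ᶜ := by
    ext ω
    simp only [Set.mem_union, Set.mem_inter_iff, Set.mem_iInter, Set.mem_compl_iff,
      Finset.mem_erase, Finset.mem_univ, and_true, ne_eq]
    constructor
    · intro h
      by_cases hω : ω ∈ A i j
      · exact Or.inl ⟨hω, h⟩
      · refine Or.inr fun k _ => ?_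
        by_cases hk : k = j
        · subst hk; exact hω
        · exact h k hk
    · rintro (⟨_, h⟩ | h)
      · exact h
      · exact fun k hk => h k trivial
  have hdisj : Disjoint (A i j ∩ ⋂ k ∈ Finset.univ.erase j, (A i k)ᶜ)
      (⋂ k ∈ (Finset.univ : Finset (Fin n)), (A i k)ᶜ) := by
    rw [Set.disjoint_left]
    rintro ω ⟨hω, -⟩ hω'
    exact (Set.mem_iInter₂.1 hω' j (Finset.mem_univ j)) hω
  have hT : (P (A i j ∩ ⋂ k ∈ Finset.univ.erase j, (A i k)ᶜ)).toReal = (1 - q) * ρi := by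
    have h := measure_union (μ := P) hdisj hmBi
    rw [← hsplit] at h
    have h' := congrArg ENNReal.toReal h
    rw [ENNReal.toReal_add (measure_ne_top P _) (measure_ne_top P _), HBi', HBi] at h'
    linarith
  rw [main, I3, HBij', hT]
  nlinarith [mul_nonneg (mul_nonneg (sub_nonneg.2 hq1) hρi0) (sub_nonneg.2
    (by nlinarith : q * ρj ≤ 1))]
end

section
/- In the setting where edges $ij$ ($i<j$) arrive as independent Poisson processes with rates $\mu_{ij} \ge 0$, $\sum_{i<j}\mu_{ij} \in (0,\infty)$, and $G_t$ is the resulting simple graph at time $t$ (with vertex set the endpoints of arrived edges), almost surely $v(G_t) = o(t)$ and $e(G_t) = o(t)$ as $t \to \infty$. -/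
open MeasureTheory ProbabilityTheory Filter
open scoped ENNReal

private lemma aux_exp (x : ℝ) : 2 - Real.exp (-x) ≤ Real.exp x := by
  have h : Real.exp x * Real.exp (-x) = 1 := by rw [← Real.exp_add]; simp
  nlinarith [Real.exp_pos x, Real.exp_pos (-x), sq_nonneg (Real.exp x - 1)]

private lemma det_tendsto (g : ℝ → ℝ≥0∞) (hmono : Monotone g)
    (h : ∀ j : ℕ, ∃ C : ℕ, ∀ᶠ n : ℕ in atTop,
      g n ≤ (C : ℝ≥0∞) + ENNReal.ofReal (n / ((j:ℝ)+1))) :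
    Tendsto (fun t : ℝ => g t / ENNReal.ofReal t) atTop (nhds 0) := by
  rw [ENNReal.tendsto_nhds_zero]
  intro ε hε
  obtain ⟨m, hm⟩ := ENNReal.exists_inv_nat_lt hε.ne'
  set j : ℕ := 3 * m + 2 with hj
  have h3 : ENNReal.ofReal (3 / ((j:ℝ)+1)) ≤ ε := by
    have hq : (3:ℝ) / ((j:ℝ)+1) = ((m:ℝ)+1)⁻¹ := by
      rw [hj]; push_cast; rw [inv_eq_one_div]; rw [div_eq_div_iff (by positivity) (by positivity)]
      ring
    rw [hq, ENNReal.ofReal_inv_of_pos (by positivity)]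
    have h2 : ENNReal.ofReal ((m:ℝ)+1) = (m:ℝ≥0∞) + 1 := by
      rw [ENNReal.ofReal_add (by positivity) zero_le_one, ENNReal.ofReal_natCast,
        ENNReal.ofReal_one]
    rw [h2]
    exact le_trans (ENNReal.inv_le_inv' le_self_add) hm.le
  obtain ⟨C, hC⟩ := h j
  obtain ⟨n₀, hn₀⟩ := eventually_atTop.1 hC
  have hjpos : (0:ℝ) < (j:ℝ) + 1 := by positivity
  filter_upwards [eventually_ge_atTop (1:ℝ), eventually_ge_atTop ((n₀:ℝ)),
    eventually_ge_atTop ((C:ℝ) * ((j:ℝ)+1))] with t ht1 htn htC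
  have ht0 : (0:ℝ) ≤ t := le_trans zero_le_one ht1
  set n : ℕ := ⌈t⌉₊ with hn
  have h1 : g t ≤ (C:ℝ≥0∞) + ENNReal.ofReal ((n:ℝ) / ((j:ℝ)+1)) := by
    refine le_trans (hmono (Nat.le_ceil t)) (hn₀ n ?_)
    exact_mod_cast htn.trans (Nat.le_ceil t)
  have h2 : (n:ℝ) ≤ t + 1 := (Nat.ceil_lt_add_one ht0).le
  have hCt : (C:ℝ≥0∞) ≤ ENNReal.ofReal (t / ((j:ℝ)+1)) := by
    rw [← ENNReal.ofReal_natCast C]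
    exact ENNReal.ofReal_le_ofReal ((le_div_iff₀ hjpos).2 htC)
  have h4 : g t ≤ ENNReal.ofReal (3 / ((j:ℝ)+1) * t) := by
    refine h1.trans (le_trans (add_le_add hCt (ENNReal.ofReal_le_ofReal
      (div_le_div_of_nonneg_right h2 hjpos.le))) ?_)
    rw [← ENNReal.ofReal_add (by positivity) (by positivity)]
    refine ENNReal.ofReal_le_ofReal ?_
    rw [← add_div, div_mul_eq_mul_div]
    exact div_le_div_of_nonneg_right (by linarith) hjpos.le
  have h5 : g t / ENNReal.ofReal t ≤ ENNReal.ofReal (3 / ((j:ℝ)+1)) := by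
    rw [ENNReal.ofReal_mul (by positivity)] at h4
    refine le_trans (ENNReal.div_le_div_right h4 _) ?_
    rw [mul_div_assoc, ENNReal.div_self (ENNReal.ofReal_pos.2 (by linarith)).ne'
      ENNReal.ofReal_ne_top, mul_one]
  exact h5.trans h3

private lemma aux_exp' (x : ℝ) : 2 - Real.exp (-x) ≤ Real.exp x := by
  have h : Real.exp x * Real.exp (-x) = 1 := by rw [← Real.exp_add]; simp
  nlinarith [Real.exp_pos x, Real.exp_pos (-x), sq_nonneg (Real.exp x - 1)]

private lemma core {Ω : Type*} [MeasurableSpace Ω] (P : Measure Ω) [IsProbabilityMeasure P]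
    {ι : Type*} [Countable ι]
    (A : ℕ → ι → Set Ω) (hAmeas : ∀ n p, MeasurableSet (A n p))
    (hindep : ∀ n : ℕ, ∀ u : Finset ι, P (⋂ p ∈ u, A n p) = ∏ p ∈ u, P (A n p))
    (c : ι → ℝ) (hc0 : ∀ p, 0 ≤ c p)
    (hA : ∀ (n : ℕ) (p : ι), 1 + P (A n p) ≤ ENNReal.ofReal (Real.exp (n * c p)))
    (htail : ∀ δ : ℝ, 0 < δ → ∃ F : Finset ι,
        ∀ s : Finset ι, Disjoint s F → ∑ p ∈ s, c p ≤ δ)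
    (j : ℕ) :
    ∃ C : ℕ, ∀ᵐ ω ∂P, ∀ᶠ n : ℕ in atTop,
      (∑' p : ι, Set.indicator (A n p) (fun _ => (1:ℝ≥0∞)) ω)
        ≤ (C : ℝ≥0∞) + ENNReal.ofReal ((n:ℝ) / ((j:ℝ)+1)) := by
  classical
  set δ : ℝ := Real.log 2 / (2*((j:ℝ)+1)) with hδdef
  have hδ : 0 < δ := div_pos (Real.log_pos one_lt_two) (by positivity)
  obtain ⟨F, hF⟩ := htail δ hδ
  refine ⟨F.card, ?_⟩
  -- notation
  set ind : ℕ → ι → Ω → ℝ≥0∞ :=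
    fun n p => Set.indicator (A n p) (fun _ => (1:ℝ≥0∞)) with hind
  -- sum of indicators over a finset is the card of the filtered finset
  have hsum_eq : ∀ (n : ℕ) (s : Finset ι) (ω : Ω),
      ∑ p ∈ s, ind n p ω = ((s.filter (fun p => ω ∈ A n p)).card : ℝ≥0∞) := by
    intro n s ω
    rw [← Finset.sum_filter_add_sum_filter_not s (fun p => ω ∈ A n p)]
    have h1 : ∑ p ∈ s.filter (fun p => ω ∈ A n p), ind n p ω
        = ((s.filter (fun p => ω ∈ A n p)).card : ℝ≥0∞) := by
      rw [Finset.sum_congr rfl (fun p hp => ?_), Finset.sum_const, nsmul_eq_mul, mul_one]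
      exact Set.indicator_of_mem (Finset.mem_filter.1 hp).2 _
    have h2 : ∑ p ∈ s.filter (fun p => ¬ ω ∈ A n p), ind n p ω = 0 := by
      refine Finset.sum_eq_zero (fun p hp => ?_)
      exact Set.indicator_of_notMem (Finset.mem_filter.1 hp).2 _
    rw [h1, h2, add_zero]
  -- expectation of the product Z s n
  have hEZ : ∀ (n : ℕ) (s : Finset ι),
      ∫⁻ ω, ∏ p ∈ s, (ind n p ω + 1) ∂P = ∏ p ∈ s, (P (A n p) + 1) := by
    intro n s
    have hprod : ∀ ω : Ω, ∏ p ∈ s, (ind n p ω + 1)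
        = ∑ u ∈ s.powerset, Set.indicator (⋂ p ∈ u, A n p) (fun _ => (1:ℝ≥0∞)) ω := by
      intro ω
      rw [Finset.prod_add]
      refine Finset.sum_congr rfl (fun u hu => ?_)
      rw [Finset.prod_const_one, mul_one]
      by_cases h : ∀ p ∈ u, ω ∈ A n p
      · rw [Finset.prod_congr rfl (fun p hp => Set.indicator_of_mem (h p hp) _),
          Finset.prod_const_one, Set.indicator_of_mem (Set.mem_iInter₂.2 h)]
      · push_neg at h
        obtain ⟨p, hp, hpA⟩ := h
        rw [Finset.prod_eq_zero hp (Set.indicator_of_notMem hpA _),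
          Set.indicator_of_notMem (by intro hmem; exact hpA (Set.mem_iInter₂.1 hmem p hp))]
    calc ∫⁻ ω, ∏ p ∈ s, (ind n p ω + 1) ∂P
        = ∫⁻ ω, ∑ u ∈ s.powerset, Set.indicator (⋂ p ∈ u, A n p) (fun _ => (1:ℝ≥0∞)) ω ∂P := by
          exact lintegral_congr hprod
      _ = ∑ u ∈ s.powerset, ∫⁻ ω, Set.indicator (⋂ p ∈ u, A n p) (fun _ => (1:ℝ≥0∞)) ω ∂P := by
          refine lintegral_finset_sum _ (fun u hu => ?_)
          exact measurable_one.indicator (u.measurableSet_biInter (fun p _ => hAmeas n p))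
      _ = ∑ u ∈ s.powerset, P (⋂ p ∈ u, A n p) := by
          refine Finset.sum_congr rfl (fun u hu => ?_)
          exact lintegral_indicator_one (u.measurableSet_biInter (fun p _ => hAmeas n p))
      _ = ∑ u ∈ s.powerset, ∏ p ∈ u, P (A n p) := by
          exact Finset.sum_congr rfl (fun u hu => hindep n u)
      _ = ∏ p ∈ s, (P (A n p) + 1) := by
          rw [Finset.prod_add]
          refine Finset.sum_congr rfl (fun u hu => ?_)
          rw [Finset.prod_const_one, mul_one]
  -- bound on the expectation
  have hEZbound : ∀ (n : ℕ) (s : Finset ι), Disjoint s F →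
      ∫⁻ ω, ∏ p ∈ s, (ind n p ω + 1) ∂P ≤ ENNReal.ofReal (Real.exp ((n:ℝ) * δ)) := by
    intro n s hs
    rw [hEZ n s]
    calc ∏ p ∈ s, (P (A n p) + 1)
        ≤ ∏ p ∈ s, ENNReal.ofReal (Real.exp ((n:ℝ) * c p)) := by
          refine Finset.prod_le_prod' (fun p hp => ?_)
          rw [add_comm]; exact hA n p
      _ = ENNReal.ofReal (∏ p ∈ s, Real.exp ((n:ℝ) * c p)) := by
          rw [ENNReal.ofReal_prod_of_nonneg (fun p _ => (Real.exp_pos _).le)]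
      _ = ENNReal.ofReal (Real.exp (∑ p ∈ s, (n:ℝ) * c p)) := by rw [Real.exp_sum]
      _ ≤ ENNReal.ofReal (Real.exp ((n:ℝ) * δ)) := by
          refine ENNReal.ofReal_le_ofReal (Real.exp_le_exp.2 ?_)
          rw [← Finset.mul_sum]
          exact mul_le_mul_of_nonneg_left (hF s hs) (Nat.cast_nonneg n)
  -- pointwise: many indicators forces a large product
  have hpoint : ∀ (n : ℕ) (s : Finset ι) (k : ℕ) (ω : Ω),
      ((k:ℝ≥0∞) ≤ ∑ p ∈ s, ind n p ω) → (2:ℝ≥0∞)^k ≤ ∏ p ∈ s, (ind n p ω + 1) := by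
    intro n s k ω hk
    set u : Finset ι := s.filter (fun p => ω ∈ A n p) with hu
    rw [hsum_eq n s ω] at hk
    have hcard : k ≤ u.card := by exact_mod_cast hk
    calc (2:ℝ≥0∞)^k ≤ (2:ℝ≥0∞)^u.card := by
          exact pow_le_pow_right' one_le_two hcard
      _ = ∏ p ∈ u, ((ind n p ω) + 1) := by
          have h2 : ∀ p ∈ u, ind n p ω + 1 = 2 := by
            intro p hp
            have h3 : ind n p ω = 1 := Set.indicator_of_mem (Finset.mem_filter.1 hp).2 _
            rw [h3]; norm_num
          rw [Finset.prod_congr rfl h2, Finset.prod_const]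
      _ ≤ ∏ p ∈ s, (ind n p ω + 1) := by
          refine Finset.prod_le_prod_of_subset_of_one_le' (Finset.filter_subset _ _)
            (fun p _ _ => le_add_self)
  -- Markov bound
  have hmarkov : ∀ (n : ℕ) (s : Finset ι) (k : ℕ), Disjoint s F →
      P {ω | (2:ℝ≥0∞)^k ≤ ∏ p ∈ s, (ind n p ω + 1)}
        ≤ ENNReal.ofReal (Real.exp ((n:ℝ) * δ)) / 2^k := by
    intro n s k hs
    have hmeas : Measurable (fun ω => ∏ p ∈ s, (ind n p ω + 1)) := by
      refine Finset.measurable_prod _ (fun p _ => ?_)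
      exact (measurable_one.indicator (hAmeas n p)).add measurable_const
    have h1 := mul_meas_ge_le_lintegral₀ (μ := P) hmeas.aemeasurable ((2:ℝ≥0∞)^k)
    rw [ENNReal.le_div_iff_mul_le (Or.inl (pow_ne_zero _ two_ne_zero)) (Or.inl (ENNReal.pow_ne_top ENNReal.ofNat_ne_top))]
    rw [mul_comm]
    exact h1.trans (hEZbound n s hs)
  -- the tail sum
  set Fc : Set ι := (↑F : Set ι)ᶜ with hFc
  set N : ℕ → Ω → ℝ≥0∞ := fun n ω => ∑' q : ↥Fc, ind n q.1 ω with hN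
  set cn : ℕ → ℕ := fun n => n / (j+1) with hcn
  set B : ℕ → Set Ω := fun n => {ω | ((cn n : ℕ) : ℝ≥0∞) ≤ N n ω} with hB
  have hemb : ∀ (s : Finset ↥Fc), Disjoint (s.map (Function.Embedding.subtype _)) F := by
    intro s
    rw [Finset.disjoint_left]
    intro p hp hpF
    obtain ⟨q, hq, rfl⟩ := Finset.mem_map.1 hp
    exact q.2 hpF
  have hPB : ∀ n : ℕ, P (B n)
      ≤ ENNReal.ofReal 2 * ENNReal.ofReal (Real.exp (-δ)) ^ n := by
    intro n
    have key : P (B n) ≤ ENNReal.ofReal (Real.exp ((n:ℝ) * δ)) / 2 ^ (cn n) := by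
      rcases Nat.eq_zero_or_pos (cn n) with h0 | hposn
      · rw [h0, pow_zero]
        simp only [div_one]
        calc P (B n) ≤ 1 := prob_le_one
          _ ≤ ENNReal.ofReal (Real.exp ((n:ℝ) * δ)) := by
              rw [ENNReal.one_le_ofReal]
              exact Real.one_le_exp (by positivity)
      · obtain ⟨k, hk⟩ : ∃ k, cn n = k + 1 := ⟨cn n - 1, (Nat.succ_pred_eq_of_pos hposn).symm⟩
        have hsub : B n ⊆ ⋃ s : Finset ↥Fc,
            {ω | (2:ℝ≥0∞) ^ (cn n) ≤ ∏ q ∈ s, (ind n q.1 ω + 1)} := by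
          intro ω hω
          have h1 : ((k:ℝ≥0∞)) < N n ω := by
            refine lt_of_lt_of_le ?_ hω
            exact_mod_cast (by omega : k < cn n)
          rw [hN] at h1
          simp only [ENNReal.tsum_eq_iSup_sum, lt_iSup_iff] at h1
          obtain ⟨s, hs⟩ := h1
          refine Set.mem_iUnion.2 ⟨s, ?_⟩
          have hms : ∑ q ∈ s, ind n q.1 ω
              = ∑ p ∈ s.map (Function.Embedding.subtype _), ind n p ω := by
            rw [Finset.sum_map]; rfl
          have hint : ((cn n : ℕ) : ℝ≥0∞) ≤ ∑ p ∈ s.map (Function.Embedding.subtype _), ind n p ω := by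
            rw [hsum_eq] at hms ⊢
            rw [hms] at hs
            have h6 : k < (((s.map (Function.Embedding.subtype _)).filter
                (fun p => ω ∈ A n p)).card : ℕ) := by exact_mod_cast hs
            exact_mod_cast (by omega : cn n ≤ ((s.map (Function.Embedding.subtype _)).filter
                (fun p => ω ∈ A n p)).card)
          have h2 := hpoint n (s.map (Function.Embedding.subtype _)) (cn n) ω hint
          refine Set.mem_setOf_eq ▸ ?_
          rw [Finset.prod_map] at h2
          exact h2
        have hdir : Directed (· ⊆ ·) (fun s : Finset ↥Fc =>
            {ω | (2:ℝ≥0∞) ^ (cn n) ≤ ∏ q ∈ s, (ind n q.1 ω + 1)}) := by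
          intro s t
          refine ⟨s ∪ t, fun ω hω => ?_, fun ω hω => ?_⟩
          · simp only [Set.mem_setOf_eq] at hω ⊢
            exact le_trans hω (Finset.prod_le_prod_of_subset_of_one_le'
              Finset.subset_union_left (fun p _ _ => le_add_self))
          · simp only [Set.mem_setOf_eq] at hω ⊢
            exact le_trans hω (Finset.prod_le_prod_of_subset_of_one_le'
              Finset.subset_union_right (fun p _ _ => le_add_self))
        calc P (B n) ≤ P (⋃ s : Finset ↥Fc,
              {ω | (2:ℝ≥0∞) ^ (cn n) ≤ ∏ q ∈ s, (ind n q.1 ω + 1)}) := measure_mono hsub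
          _ = ⨆ s : Finset ↥Fc,
              P {ω | (2:ℝ≥0∞) ^ (cn n) ≤ ∏ q ∈ s, (ind n q.1 ω + 1)} := hdir.measure_iUnion
          _ ≤ ENNReal.ofReal (Real.exp ((n:ℝ) * δ)) / 2 ^ (cn n) := by
              refine iSup_le (fun s => ?_)
              have h3 := hmarkov n (s.map (Function.Embedding.subtype _)) (cn n) (hemb s)
              refine le_trans (le_of_eq (congrArg P ?_)) h3
              ext ω
              simp only [Set.mem_setOf_eq, Finset.prod_map, Function.Embedding.coe_subtype]
    have hC' : (n:ℝ) ≤ ((j:ℝ)+1) * (cn n : ℝ) + j := by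
      have h1 := Nat.div_add_mod n (j+1)
      have h2 : n % (j+1) ≤ j := Nat.lt_succ_iff.1 (Nat.mod_lt n (Nat.succ_pos j))
      have h3 : ((j:ℝ)+1) * (cn n : ℝ) + ((n % (j+1) : ℕ) : ℝ) = (n:ℝ) := by
        exact_mod_cast congrArg (Nat.cast : ℕ → ℝ) h1
      have h4 : ((n % (j+1) : ℕ) : ℝ) ≤ (j:ℝ) := by exact_mod_cast h2
      linarith
    have hlog : 0 < Real.log 2 := Real.log_pos one_lt_two
    have hexp : Real.exp ((n:ℝ)*δ) / 2^(cn n) ≤ 2 * Real.exp (-δ) ^ n := by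
      have h2eq : (2:ℝ)^(cn n) = Real.exp ((cn n : ℕ) * Real.log 2) := by
        rw [Real.exp_nat_mul, Real.exp_log two_pos]
      have h2δ : 2 * ((n:ℝ)*δ) ≤ ((cn n:ℝ)+1) * Real.log 2 := by
        have h5 : 2 * ((n:ℝ)*δ) = (n:ℝ) * Real.log 2 / ((j:ℝ)+1) := by
          rw [hδdef]; field_simp
        rw [h5, div_le_iff₀ (by positivity)]
        nlinarith
      calc Real.exp ((n:ℝ)*δ) / 2^(cn n) = Real.exp ((n:ℝ)*δ - (cn n : ℕ) * Real.log 2) := by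
            rw [Real.exp_sub, h2eq]
        _ ≤ Real.exp (Real.log 2 + (n:ℕ) * -δ) := by
            apply Real.exp_le_exp.2
            push_cast
            linarith
        _ = 2 * Real.exp (-δ) ^ n := by
            rw [Real.exp_add, Real.exp_log two_pos, Real.exp_nat_mul]
    calc P (B n) ≤ ENNReal.ofReal (Real.exp ((n:ℝ)*δ)) / 2^(cn n) := key
      _ = ENNReal.ofReal (Real.exp ((n:ℝ)*δ) / 2^(cn n)) := by
          rw [ENNReal.ofReal_div_of_pos (by positivity)]
          congr 1
          rw [ENNReal.ofReal_pow (by norm_num : (0:ℝ) ≤ 2)]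
          norm_num
      _ ≤ ENNReal.ofReal (2 * Real.exp (-δ) ^ n) := ENNReal.ofReal_le_ofReal hexp
      _ = ENNReal.ofReal 2 * ENNReal.ofReal (Real.exp (-δ)) ^ n := by
          rw [ENNReal.ofReal_mul (by norm_num), ENNReal.ofReal_pow (Real.exp_pos _).le]
  have hsumB : (∑' n, P (B n)) ≠ ∞ := by
    refine ne_top_of_le_ne_top ?_ (ENNReal.tsum_le_tsum hPB)
    rw [ENNReal.tsum_mul_left, ENNReal.tsum_geometric]
    refine ENNReal.mul_ne_top ENNReal.ofReal_ne_top (ENNReal.inv_ne_top.2 ?_)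
    have hr : ENNReal.ofReal (Real.exp (-δ)) < 1 := by
      rw [← ENNReal.ofReal_one]
      refine (ENNReal.ofReal_lt_ofReal_iff one_pos).2 ?_
      rw [← Real.exp_zero]
      exact Real.exp_lt_exp.2 (neg_lt_zero.2 hδ)
    exact (tsub_pos_of_lt hr).ne'
  filter_upwards [MeasureTheory.ae_eventually_notMem hsumB] with ω hω
  filter_upwards [hω] with n hn
  have hsplit : (∑' p : ι, ind n p ω) = (∑' p : ↥(↑F : Set ι), ind n p.1 ω) + N n ω := by
    exact (Summable.tsum_add_tsum_compl (s := (↑F : Set ι)) ENNReal.summable ENNReal.summable).symm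
  have hfin : (∑' p : ↥(↑F : Set ι), ind n p.1 ω) ≤ (F.card : ℝ≥0∞) := by
    rw [show (∑' p : ↥(↑F : Set ι), ind n p.1 ω) = ∑ p ∈ F, ind n p ω from
      Finset.tsum_subtype F (fun p => ind n p ω), hsum_eq]
    exact_mod_cast Nat.cast_le.2 (Finset.card_filter_le F _)
  have hNle : N n ω ≤ ENNReal.ofReal ((n:ℝ) / ((j:ℝ)+1)) := by
    refine le_trans (not_le.1 hn).le ?_
    rw [← ENNReal.ofReal_natCast]
    refine ENNReal.ofReal_le_ofReal ?_
    calc ((cn n : ℕ) : ℝ) ≤ (n:ℝ) / ((j+1 : ℕ) : ℝ) := Nat.cast_div_le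
      _ = (n:ℝ) / ((j:ℝ)+1) := by push_cast; rfl
  rw [hsplit]
  exact add_le_add hfin hNle

/-- In the Poisson edge model (independent arrival times `T i j ~ Exp(μ i j)`
over pairs `i < j`, `∑ μ ∈ (0,∞)`), almost surely `v(G_t) = o(t)` and `e(G_t) = o(t)`
as `t → ∞`. -/
theorem stmt11 {Ω : Type*} [MeasurableSpace Ω] (P : Measure Ω) [IsProbabilityMeasure P]
    (μ : ℕ → ℕ → ℝ) (hμ0 : ∀ i j, 0 ≤ μ i j) (hμsymm : ∀ i j, μ i j = μ j i)
    (hμdiag : ∀ i, μ i i = 0)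
    (hsum : Summable (fun p : ℕ × ℕ => μ p.1 p.2))
    (hpos : 0 < ∑' p : ℕ × ℕ, μ p.1 p.2)
    (T : ℕ → ℕ → Ω → ℝ≥0∞) (hTsymm : ∀ i j, T i j = T j i)
    (hTmeas : ∀ i j, Measurable (T i j))
    (hindep : iIndepFun
        (fun p : {p : ℕ × ℕ // p.1 < p.2} => T p.1.1 p.1.2) P)
    (hdist : ∀ i j, ∀ t : ℝ, 0 ≤ t →
        P {ω | T i j ω ≤ ENNReal.ofReal t} = ENNReal.ofReal (1 - Real.exp (-(μ i j) * t)))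
    (vG : ℝ → Ω → ℝ≥0∞)
    (hvG : ∀ t ω, vG t ω
        = ∑' i, Set.indicator {ω' | (⨅ j, T i j ω') ≤ ENNReal.ofReal t} (fun _ => (1:ℝ≥0∞)) ω)
    (eG : ℝ → Ω → ℝ≥0∞)
    (heG : ∀ t ω, eG t ω
        = ∑' p : {p : ℕ × ℕ // p.1 < p.2},
            Set.indicator {ω' | T p.1.1 p.1.2 ω' ≤ ENNReal.ofReal t} (fun _ => (1:ℝ≥0∞)) ω) :
    (∀ᵐ ω ∂P, Tendsto (fun t : ℝ => vG t ω / ENNReal.ofReal t) atTop (nhds 0)) ∧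
    (∀ᵐ ω ∂P, Tendsto (fun t : ℝ => eG t ω / ENNReal.ofReal t) atTop (nhds 0)) := by
  classical
  set ι := {p : ℕ × ℕ // p.1 < p.2} with hι
  set A : ℕ → ι → Set Ω :=
    fun n p => {ω | T p.1.1 p.1.2 ω ≤ ENNReal.ofReal (n:ℝ)} with hAdef
  have hAmeas : ∀ (n : ℕ) (p : ι), MeasurableSet (A n p) := fun n p =>
    (hTmeas p.1.1 p.1.2) measurableSet_Iic
  have hindep2 : ∀ (n : ℕ) (u : Finset ι), P (⋂ p ∈ u, A n p) = ∏ p ∈ u, P (A n p) := by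
    intro n u
    exact hindep.meas_biInter
      (fun p _ => ⟨Set.Iic (ENNReal.ofReal (n:ℝ)), measurableSet_Iic, rfl⟩)
  have hAbd : ∀ (n : ℕ) (p : ι),
      1 + P (A n p) ≤ ENNReal.ofReal (Real.exp ((n:ℝ) * (μ p.1.1 p.1.2))) := by
    intro n p
    have h1 := hdist p.1.1 p.1.2 (n:ℝ) (Nat.cast_nonneg n)
    have hexple : Real.exp (-(μ p.1.1 p.1.2) * (n:ℝ)) ≤ 1 := by
      rw [← Real.exp_zero]
      refine Real.exp_le_exp.2 ?_
      rw [neg_mul]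
      exact neg_nonpos.2 (mul_nonneg (hμ0 _ _) (Nat.cast_nonneg n))
    have hx : 0 ≤ 1 - Real.exp (-(μ p.1.1 p.1.2) * (n:ℝ)) := by linarith
    rw [show A n p = {ω | T p.1.1 p.1.2 ω ≤ ENNReal.ofReal (n:ℝ)} from rfl, h1,
      ← ENNReal.ofReal_one, ← ENNReal.ofReal_add zero_le_one hx]
    refine ENNReal.ofReal_le_ofReal ?_
    have h2 := aux_exp' ((μ p.1.1 p.1.2) * (n:ℝ))
    have e1 : -(μ p.1.1 p.1.2) * (n:ℝ) = -((μ p.1.1 p.1.2) * (n:ℝ)) := by ring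
    rw [e1, mul_comm ((n:ℝ))]
    linarith
  have hsummable : Summable (fun p : ι => μ p.1.1 p.1.2) :=
    hsum.subtype {p : ℕ × ℕ | p.1 < p.2}
  have htail : ∀ δ : ℝ, 0 < δ → ∃ F : Finset ι, ∀ s : Finset ι, Disjoint s F →
      ∑ p ∈ s, μ p.1.1 p.1.2 ≤ δ := by
    intro δ hδ
    obtain ⟨F, hF⟩ := summable_iff_vanishing.1 hsummable (Set.Iio δ) (Iio_mem_nhds hδ)
    exact ⟨F, fun s hs => le_of_lt (hF s hs)⟩
  choose C hC using fun j => core P A hAmeas hindep2 (fun p => μ p.1.1 p.1.2)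
      (fun p => hμ0 _ _) hAbd htail j
  have hdiag : ∀ᵐ ω ∂P, ∀ i : ℕ, T i i ω = ∞ := by
    rw [ae_all_iff]
    intro i
    rw [ae_iff]
    have h0 : ∀ n : ℕ, P {ω | T i i ω ≤ ENNReal.ofReal (n:ℝ)} = 0 := by
      intro n
      rw [hdist i i (n:ℝ) (Nat.cast_nonneg n), hμdiag i]
      simp
    refine measure_mono_null ?_ (measure_iUnion_null (s := fun n : ℕ =>
      {ω | T i i ω ≤ ENNReal.ofReal (n:ℝ)}) h0)
    intro ω hω
    obtain ⟨n, hn⟩ := ENNReal.exists_nat_gt (hω : ¬ T i i ω = ∞)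
    refine Set.mem_iUnion.2 ⟨n, ?_⟩
    simp only [Set.mem_setOf_eq, ENNReal.ofReal_natCast]
    exact hn.le
  have hae : ∀ᵐ ω ∂P, (∀ i, T i i ω = ∞) ∧ ∀ j : ℕ, ∀ᶠ n : ℕ in atTop,
      (∑' p : ι, Set.indicator (A n p) (fun _ => (1:ℝ≥0∞)) ω)
        ≤ (C j : ℝ≥0∞) + ENNReal.ofReal ((n:ℝ)/((j:ℝ)+1)) :=
    hdiag.and (ae_all_iff.2 hC)
  -- deterministic part
  have hdet : ∀ ω : Ω, (∀ i, T i i ω = ∞) → (∀ j : ℕ, ∀ᶠ n : ℕ in atTop,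
      (∑' p : ι, Set.indicator (A n p) (fun _ => (1:ℝ≥0∞)) ω)
        ≤ (C j : ℝ≥0∞) + ENNReal.ofReal ((n:ℝ)/((j:ℝ)+1))) →
      Tendsto (fun t : ℝ => vG t ω / ENNReal.ofReal t) atTop (nhds 0) ∧
      Tendsto (fun t : ℝ => eG t ω / ENNReal.ofReal t) atTop (nhds 0) := by
    intro ω hdiagω hCω
    have heGbound : ∀ j : ℕ, ∀ᶠ n : ℕ in atTop,
        eG (n:ℝ) ω ≤ (C j : ℝ≥0∞) + ENNReal.ofReal ((n:ℝ)/((j:ℝ)+1)) := by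
      intro j
      refine (hCω j).mono (fun n h => ?_)
      rw [heG]
      exact h
    have hmonoE : Monotone (fun t : ℝ => eG t ω) := by
      intro s t hst
      simp only
      rw [heG, heG]
      refine ENNReal.tsum_le_tsum (fun p => ?_)
      refine Set.indicator_le_indicator_of_subset ?_ (fun _ => zero_le) ω
      intro ω' hω'
      exact le_trans hω' (ENNReal.ofReal_le_ofReal hst)
    have heGtendsto : Tendsto (fun t : ℝ => eG t ω / ENNReal.ofReal t) atTop (nhds 0) :=
      det_tendsto _ hmonoE (fun j => ⟨C j, heGbound j⟩)
    refine ⟨?_, heGtendsto⟩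
    -- vG ≤ 2 eG (t+1)
    have hVbound : ∀ t : ℝ, 0 ≤ t → vG t ω ≤ 2 * eG (t+1) ω := by
      intro t ht
      rw [hvG, heG]
      set g : ℕ × ℕ → ℝ≥0∞ := fun p =>
        Set.indicator {ω' | T p.1 p.2 ω' ≤ ENNReal.ofReal (t+1)} (fun _ => (1:ℝ≥0∞)) ω with hg
      have hterm : ∀ i : ℕ,
          Set.indicator {ω' | (⨅ k, T i k ω') ≤ ENNReal.ofReal t} (fun _ => (1:ℝ≥0∞)) ω
          ≤ ∑' k : ℕ, g (i, k) := by
        intro i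
        by_cases hmem : ω ∈ {ω' | (⨅ k, T i k ω') ≤ ENNReal.ofReal t}
        · rw [Set.indicator_of_mem hmem]
          have hlt : (⨅ k, T i k ω) < ENNReal.ofReal (t+1) := by
            refine lt_of_le_of_lt (hmem : _ ≤ _) ?_
            exact (ENNReal.ofReal_lt_ofReal_iff (by linarith)).2 (by linarith)
          obtain ⟨k, hk⟩ := iInf_lt_iff.1 hlt
          refine le_trans ?_ (ENNReal.le_tsum k)
          show (1:ℝ≥0∞) ≤ Set.indicator {ω' | T i k ω' ≤ ENNReal.ofReal (t+1)}
            (fun _ => (1:ℝ≥0∞)) ω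
          rw [Set.indicator_of_mem (show ω ∈ _ from hk.le)]
        · rw [Set.indicator_of_notMem hmem]
          exact zero_le
      have hsymmg : ∀ i k : ℕ, g (k, i) = g (i, k) := by
        intro i k
        simp only [hg]
        simp only [hTsymm k i]
      have hdiagg : ∀ i : ℕ, g (i, i) = 0 := by
        intro i
        simp only [hg]
        rw [Set.indicator_of_notMem]
        intro hmem
        simp only [Set.mem_setOf_eq, hdiagω i] at hmem
        exact (ENNReal.ofReal_lt_top).not_ge hmem
      set S1 : Set (ℕ × ℕ) := {p | p.1 < p.2} with hS1
      set S2 : Set (ℕ × ℕ) := {p | p.2 < p.1} with hS2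
      have hle : ∀ p : ℕ × ℕ, g p ≤ S1.indicator g p + S2.indicator g p := by
        intro p
        rcases lt_trichotomy p.1 p.2 with h | h | h
        · rw [Set.indicator_of_mem (by exact h : p ∈ S1)]
          exact le_self_add
        · have : g p = 0 := by
            obtain ⟨a, b⟩ := p
            simp only at h
            subst h
            exact hdiagg a
          rw [this]
          exact zero_le
        · rw [Set.indicator_of_mem (by exact h : p ∈ S2)]
          exact le_add_self
      have hS2sum : (∑' x : ↥S2, g x) = ∑' q : ↥S1, g q := by
        let e : ↥S1 ≃ ↥S2 :=
          ⟨fun q => ⟨(q.1.2, q.1.1), q.2⟩, fun q => ⟨(q.1.2, q.1.1), q.2⟩,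
            fun q => rfl, fun q => rfl⟩
        rw [← e.tsum_eq (fun x : ↥S2 => g x.1)]
        exact tsum_congr (fun q => hsymmg q.1.1 q.1.2)
      calc (∑' i : ℕ, Set.indicator {ω' | (⨅ k, T i k ω') ≤ ENNReal.ofReal t}
              (fun _ => (1:ℝ≥0∞)) ω)
          ≤ ∑' i : ℕ, ∑' k : ℕ, g (i, k) := ENNReal.tsum_le_tsum hterm
        _ = ∑' p : ℕ × ℕ, g p := (ENNReal.tsum_prod).symm
        _ ≤ ∑' p : ℕ × ℕ, (S1.indicator g p + S2.indicator g p) := ENNReal.tsum_le_tsum hle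
        _ = (∑' p : ℕ × ℕ, S1.indicator g p) + ∑' p : ℕ × ℕ, S2.indicator g p :=
            ENNReal.tsum_add
        _ = (∑' q : ↥S1, g q) + (∑' q : ↥S2, g q) := by
            rw [tsum_subtype S1 g, tsum_subtype S2 g]
        _ = 2 * ∑' q : ↥S1, g q := by rw [hS2sum, two_mul]
        _ = 2 * ∑' p : ι, Set.indicator {ω' | T p.1.1 p.1.2 ω' ≤ ENNReal.ofReal (t+1)}
              (fun _ => (1:ℝ≥0∞)) ω := rfl
    have hmonoV : Monotone (fun t : ℝ => vG t ω) := by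
      intro s t hst
      simp only
      rw [hvG, hvG]
      refine ENNReal.tsum_le_tsum (fun i => ?_)
      refine Set.indicator_le_indicator_of_subset ?_ (fun _ => zero_le) ω
      intro ω' hω'
      exact le_trans hω' (ENNReal.ofReal_le_ofReal hst)
    refine det_tendsto _ hmonoV (fun j => ?_)
    refine ⟨2 * C (4*j+3), ?_⟩
    obtain ⟨n₀, hn₀⟩ := eventually_atTop.1 (heGbound (4*j+3))
    filter_upwards [eventually_ge_atTop n₀, eventually_ge_atTop 1] with n h1 h2
    have hv1 : vG (n:ℝ) ω ≤ 2 * eG ((n:ℝ)+1) ω := hVbound (n:ℝ) (Nat.cast_nonneg n)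
    have h2e : (2:ℝ≥0∞) * ENNReal.ofReal ((n:ℝ)/(2*((j:ℝ)+1)))
        = ENNReal.ofReal ((n:ℝ)/((j:ℝ)+1)) := by
      rw [← ENNReal.ofReal_ofNat 2, ← ENNReal.ofReal_mul (by norm_num)]
      congr 1
      field_simp
    have hcast : ((n:ℝ)+1) = (((n+1:ℕ)):ℝ) := by push_cast; ring
    have hv2 : eG ((n:ℝ)+1) ω ≤ (C (4*j+3) : ℝ≥0∞)
        + ENNReal.ofReal (((n+1:ℕ):ℝ)/(((4*j+3:ℕ):ℝ)+1)) := by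
      rw [hcast]
      exact hn₀ (n+1) (by omega)
    have hv3 : ENNReal.ofReal (((n+1:ℕ):ℝ)/(((4*j+3:ℕ):ℝ)+1))
        ≤ ENNReal.ofReal ((n:ℝ)/(2*((j:ℝ)+1))) := by
      refine ENNReal.ofReal_le_ofReal ?_
      have hn1 : (1:ℝ) ≤ (n:ℝ) := by exact_mod_cast h2
      rw [div_le_div_iff₀ (by positivity) (by positivity)]
      push_cast
      nlinarith
    calc vG (n:ℝ) ω ≤ 2 * ((C (4*j+3) : ℝ≥0∞)
            + ENNReal.ofReal ((n:ℝ)/(2*((j:ℝ)+1)))) := by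
          exact hv1.trans (mul_le_mul_right (hv2.trans (add_le_add_right hv3 _)) 2)
      _ = 2 * (C (4*j+3) : ℝ≥0∞) + ENNReal.ofReal ((n:ℝ)/((j:ℝ)+1)) := by
          rw [mul_add, h2e]
      _ ≤ ((2 * C (4*j+3) : ℕ) : ℝ≥0∞) + ENNReal.ofReal ((n:ℝ)/((j:ℝ)+1)) := by
          refine add_le_add_left (le_of_eq ?_) _
          push_cast
          ring
  constructor
  · filter_upwards [hae] with ω hω
    exact (hdet ω hω.1 hω.2).1
  · filter_upwards [hae] with ω hω
    exact (hdet ω hω.1 hω.2).2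
end

section
/- Let $c > 0$ and let $q_i \asymp \tfrac{1}{i \log^2 i}$ for $i \ge 2$. Then $v(t) := \sum_{i\ge2} \min(1, t q_i) \asymp t/\log t$ as $t \to \infty$, and $e(t) := \sum_{i \ne j} \min(1, t q_i q_j) \asymp t/\log t$ as $t \to \infty$. Consequently $e(t) \asymp v(t)$, i.e., the corresponding rank-1 edge-exchangeable random graph is extremely sparse. -/
open Filter Real

lemma tele_hasSum (k : ℕ) (hk : 2 ≤ k) :
    HasSum (fun n : ℕ => 1 / Real.log (n + k) - 1 / Real.log (n + k + 1)) (1 / Real.log k) := by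
  rw [hasSum_iff_tendsto_nat_of_nonneg]
  · have hps : ∀ N : ℕ, ∑ n ∈ Finset.range N,
        (1 / Real.log (n + k) - 1 / Real.log (n + k + 1)) = 1 / Real.log k - 1 / Real.log (N + k) := by
      intro N
      have := Finset.sum_range_sub' (f := fun n : ℕ => 1 / Real.log (n + k)) N
      rw [show (1:ℝ) / Real.log k - 1 / Real.log (N + k)
          = 1 / Real.log ((0:ℕ) + k) - 1 / Real.log ((N:ℕ) + k) by norm_num, ← this]
      apply Finset.sum_congr rfl
      intro n _
      push_cast
      ring_nf
    have h2 : Tendsto (fun N : ℕ => 1 / Real.log (N + k)) atTop (nhds 0) := by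
      have ha : Tendsto (fun N : ℕ => (N : ℝ) + k) atTop atTop :=
        Filter.tendsto_atTop_add_const_right _ _ tendsto_natCast_atTop_atTop
      have := (tendsto_inv_atTop_zero.comp (Real.tendsto_log_atTop.comp ha))
      simpa [Function.comp_def, one_div] using this
    have : Tendsto (fun N : ℕ => 1 / Real.log k - 1 / Real.log (N + k)) atTop
        (nhds (1 / Real.log k - 0)) := Tendsto.const_sub _ h2
    simp only [sub_zero] at this
    exact Tendsto.congr (fun N => (hps N).symm) this
  · intro n
    have h1 : (1:ℝ) < (n + k : ℝ) := by
      have h2 : (2:ℝ) ≤ (k:ℝ) := by exact_mod_cast hk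
      have : (0:ℝ) ≤ (n:ℝ) := Nat.cast_nonneg n
      linarith
    have l1 : 0 < Real.log (n + k) := Real.log_pos h1
    have l2 : Real.log (n + k) ≤ Real.log (n + k + 1) :=
      Real.log_le_log (by linarith) (by linarith)
    have := one_div_le_one_div_of_le l1 l2
    linarith

lemma D_bounds (i : ℕ) (hi : 2 ≤ i) :
    (1 / Real.log i - 1 / Real.log (i + 1) ≤ 1 / ((i : ℝ) * (Real.log i) ^ 2)) ∧
    (1 / ((i : ℝ) * (Real.log i) ^ 2) ≤ 4 * (1 / Real.log i - 1 / Real.log (i + 1))) := by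
  have hi2 : (2:ℝ) ≤ (i:ℝ) := by exact_mod_cast hi
  have hipos : (0:ℝ) < i := by linarith
  have l1 : 0 < Real.log i := Real.log_pos (by linarith)
  have l2 : Real.log i ≤ Real.log (i + 1) := Real.log_le_log hipos (by linarith)
  have l3 : 0 < Real.log (i + 1) := lt_of_lt_of_le l1 l2
  have key : 1 / Real.log i - 1 / Real.log (i + 1)
      = (Real.log (i + 1) - Real.log i) / (Real.log i * Real.log (i + 1)) := by
    field_simp
  have hup : Real.log (i + 1) - Real.log i ≤ 1 / (i:ℝ) := by
    have h := Real.log_le_sub_one_of_pos (x := ((i:ℝ) + 1) / i) (by positivity)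
    rw [Real.log_div (by linarith) (ne_of_gt hipos)] at h
    have he : ((i:ℝ) + 1) / i - 1 = 1 / i := by field_simp; ring
    linarith
  have hlo : 1 / ((i:ℝ) + 1) ≤ Real.log (i + 1) - Real.log i := by
    have h := Real.log_le_sub_one_of_pos (x := (i:ℝ) / ((i:ℝ) + 1)) (by positivity)
    rw [Real.log_div (ne_of_gt hipos) (by linarith)] at h
    have he : (i:ℝ) / ((i:ℝ) + 1) - 1 = -(1 / ((i:ℝ) + 1)) := by field_simp; ring
    linarith
  have hl4 : Real.log (i + 1) ≤ 2 * Real.log i := by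
    have hsq : ((i:ℝ) + 1) ≤ (i:ℝ) ^ 2 := by nlinarith
    have := Real.log_le_log (by linarith) hsq
    rwa [Real.log_pow, Nat.cast_ofNat] at this
  constructor
  · rw [key]
    have h1 : (Real.log (i + 1) - Real.log i) / (Real.log i * Real.log (i + 1))
        ≤ (1 / (i:ℝ)) / (Real.log i * Real.log i) := by
      apply div_le_div₀ (by positivity) hup (by positivity)
      exact mul_le_mul_of_nonneg_left l2 l1.le
    have h2 : (1 / (i:ℝ)) / (Real.log i * Real.log i) = 1 / ((i:ℝ) * (Real.log i) ^ 2) := by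
      rw [div_div, one_div, one_div]
      congr 1
      ring
    linarith
  · rw [key]
    have hlo2 : 1 / (2 * (i:ℝ)) ≤ Real.log (i + 1) - Real.log i := by
      refine le_trans ?_ hlo
      apply one_div_le_one_div_of_le (by linarith) (by linarith)
    have h1 : (1 / (2 * (i:ℝ))) / (Real.log i * (2 * Real.log i))
        ≤ (Real.log (i + 1) - Real.log i) / (Real.log i * Real.log (i + 1)) := by
      apply div_le_div₀ (by linarith) hlo2 (by positivity)
      exact mul_le_mul_of_nonneg_left hl4 l1.le
    have h2 : (1 / (2 * (i:ℝ))) / (Real.log i * (2 * Real.log i))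
        = 1 / (4 * ((i:ℝ) * (Real.log i) ^ 2)) := by
      rw [div_div, one_div, one_div]
      congr 1
      ring
    rw [h2] at h1
    have h3 : 1 / ((i:ℝ) * (Real.log i) ^ 2) = 4 * (1 / (4 * ((i:ℝ) * (Real.log i) ^ 2))) := by
      rw [mul_one_div, div_eq_div_iff (by positivity) (by positivity)]
      ring
    rw [h3]
    linarith

lemma tail_bounds (k : ℕ) (hk : 2 ≤ k) :
    Summable (fun n : ℕ => 1 / (((n : ℝ) + k) * (Real.log ((n : ℝ) + k)) ^ 2)) ∧
    1 / Real.log k ≤ (∑' n : ℕ, 1 / (((n : ℝ) + k) * (Real.log ((n : ℝ) + k)) ^ 2)) ∧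
    (∑' n : ℕ, 1 / (((n : ℝ) + k) * (Real.log ((n : ℝ) + k)) ^ 2)) ≤ 4 / Real.log k := by
  set u := fun n : ℕ => 1 / Real.log ((n : ℝ) + k) - 1 / Real.log ((n : ℝ) + k + 1) with hu_def
  set w := fun n : ℕ => 1 / (((n : ℝ) + k) * (Real.log ((n : ℝ) + k)) ^ 2) with hw_def
  have hu : HasSum u (1 / Real.log k) := tele_hasSum k hk
  have hDb : ∀ n : ℕ, u n ≤ w n ∧ w n ≤ 4 * u n := by
    intro n
    have := D_bounds (n + k) (by omega)
    simp only [hu_def, hw_def]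
    push_cast at this ⊢
    exact this
  have hwnn : ∀ n, 0 ≤ w n := by
    intro n
    have h1 : (1:ℝ) < (n : ℝ) + k := by
      have : (2:ℝ) ≤ (k:ℝ) := by exact_mod_cast hk
      have : (0:ℝ) ≤ (n:ℝ) := Nat.cast_nonneg n
      linarith
    have := Real.log_pos h1
    simp only [hw_def]
    positivity
  have hsw : Summable w :=
    Summable.of_nonneg_of_le hwnn (fun n => (hDb n).2) (hu.summable.mul_left 4)
  refine ⟨hsw, ?_, ?_⟩
  · have := Summable.tsum_le_tsum (fun n => (hDb n).1) hu.summable hsw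
    rwa [hu.tsum_eq] at this
  · have h4 : (∑' n, 4 * u n) = 4 * (1 / Real.log k) := by
      rw [tsum_mul_left, hu.tsum_eq]
    have := Summable.tsum_le_tsum (fun n => (hDb n).2) hsw (hu.summable.mul_left 4)
    rw [h4] at this
    calc (∑' n, w n) ≤ 4 * (1 / Real.log k) := this
      _ = 4 / Real.log k := by ring

lemma log_ge_one {t : ℝ} (ht : 16 ≤ t) : 1 ≤ Real.log t := by
  rw [Real.le_log_iff_exp_le (by linarith)]
  calc Real.exp 1 ≤ 2.7182818286 := Real.exp_one_lt_d9.le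
    _ ≤ t := by linarith

lemma sqrt_le_two_div {t : ℝ} (ht : 16 ≤ t) : Real.sqrt t ≤ 2 * (t / Real.log t) := by
  have hlt : (0:ℝ) < Real.log t := by linarith [log_ge_one ht]
  have hs : Real.log t = 2 * Real.log (Real.sqrt t) := by
    rw [Real.log_sqrt (by linarith)]; ring
  have h2 : Real.log (Real.sqrt t) ≤ Real.sqrt t - 1 :=
    Real.log_le_sub_one_of_pos (Real.sqrt_pos.2 (by linarith))
  have hss : Real.sqrt t * Real.sqrt t = t := Real.mul_self_sqrt (by linarith)
  rw [show 2 * (t / Real.log t) = 2 * t / Real.log t by ring, le_div_iff₀ hlt]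
  nlinarith [Real.sqrt_nonneg t]

lemma vbounds (a b : ℝ) (ha : 0 < a) (hb : 0 < b) (r : ℕ → ℝ)
    (hr : ∀ i : ℕ, 2 ≤ i → a / ((i : ℝ) * (Real.log i) ^ 2) ≤ r i ∧
        r i ≤ b / ((i : ℝ) * (Real.log i) ^ 2)) :
    ∀ t : ℝ, b + 16 ≤ t →
      Summable (fun i : ℕ => min 1 (t * r (i + 2))) ∧
      (a / 2) * (t / Real.log t) ≤ (∑' i : ℕ, min 1 (t * r (i + 2))) ∧
      (∑' i : ℕ, min 1 (t * r (i + 2))) ≤ (4 + 8 * b) * (t / Real.log t) := by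
  intro t ht
  have ht16 : (16:ℝ) ≤ t := by linarith
  have htpos : (0:ℝ) < t := by linarith
  have hlog1 : 1 ≤ Real.log t := log_ge_one ht16
  have hlogpos : 0 < Real.log t := by linarith
  -- basic facts about indices
  have hXpos : ∀ i : ℕ, (0:ℝ) < ((i:ℝ) + 2) * (Real.log ((i:ℝ) + 2)) ^ 2 := by
    intro i
    have h1 : (1:ℝ) < (i:ℝ) + 2 := by
      have : (0:ℝ) ≤ (i:ℝ) := Nat.cast_nonneg i
      linarith
    have := Real.log_pos h1
    positivity
  have hr' : ∀ i : ℕ, a / (((i:ℝ) + 2) * (Real.log ((i:ℝ) + 2)) ^ 2) ≤ r (i + 2) ∧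
      r (i + 2) ≤ b / (((i:ℝ) + 2) * (Real.log ((i:ℝ) + 2)) ^ 2) := by
    intro i
    have := hr (i + 2) (by omega)
    push_cast at this
    exact this
  have hrpos : ∀ i : ℕ, 0 < r (i + 2) :=
    fun i => lt_of_lt_of_le (div_pos ha (hXpos i)) (hr' i).1
  set f := fun i : ℕ => min 1 (t * r (i + 2)) with hf_def
  have hfnn : ∀ i, 0 ≤ f i :=
    fun i => le_min (by norm_num) (mul_nonneg htpos.le (hrpos i).le)
  have hfle : ∀ i, f i ≤ t * b / (((i:ℝ) + 2) * (Real.log ((i:ℝ) + 2)) ^ 2) := by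
    intro i
    calc f i ≤ t * r (i + 2) := min_le_right _ _
      _ ≤ t * (b / (((i:ℝ) + 2) * (Real.log ((i:ℝ) + 2)) ^ 2)) :=
          mul_le_mul_of_nonneg_left (hr' i).2 htpos.le
      _ = t * b / (((i:ℝ) + 2) * (Real.log ((i:ℝ) + 2)) ^ 2) := by ring
  -- summability of f
  obtain ⟨hsP2, -, -⟩ := tail_bounds 2 le_rfl
  have hsmaj : Summable (fun i : ℕ => t * b / (((i:ℝ) + 2) * (Real.log ((i:ℝ) + 2)) ^ 2)) := by
    have := hsP2.mul_left (t * b)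
    refine this.congr fun i => ?_
    push_cast
    rw [mul_one_div]
  have hsf : Summable f := Summable.of_nonneg_of_le hfnn hfle hsmaj
  refine ⟨hsf, ?_, ?_⟩
  · -- lower bound
    set K := ⌈b * t⌉₊ + 1 with hK_def
    set g := fun i : ℕ => if K ≤ i then
        t * a / (((i:ℝ) + 2) * (Real.log ((i:ℝ) + 2)) ^ 2) else 0 with hg_def
    obtain ⟨hsPK, hPKlo, -⟩ := tail_bounds (K + 2) (by omega)
    have hgeq : ∀ n : ℕ, g (n + K) =
        (t * a) * (1 / (((n:ℝ) + (K + 2 : ℕ)) * (Real.log ((n:ℝ) + (K + 2 : ℕ))) ^ 2)) := by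
      intro n
      simp only [hg_def, if_pos (Nat.le_add_left K n)]
      push_cast
      rw [add_assoc, mul_one_div]
    have hsg : Summable g := by
      rw [← summable_nat_add_iff K]
      exact (hsPK.mul_left (t * a)).congr fun n => (hgeq n).symm
    have hgle : ∀ i, g i ≤ f i := by
      intro i
      by_cases hi : K ≤ i
      · simp only [hg_def, if_pos hi]
        have hKbt : b * t ≤ (K:ℝ) := by
          calc b * t ≤ (⌈b * t⌉₊ : ℝ) := Nat.le_ceil _
            _ ≤ (K:ℝ) := by exact_mod_cast Nat.le_succ _
        have hibt : b * t ≤ (i:ℝ) + 2 := by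
          have : (K:ℝ) ≤ (i:ℝ) := by exact_mod_cast hi
          linarith
        have hlog2 : 1 ≤ Real.log ((i:ℝ) + 2) := by
          rw [Real.le_log_iff_exp_le (by positivity)]
          have : (K:ℝ) ≤ (i:ℝ) := by exact_mod_cast hi
          have hK1 : (1:ℝ) ≤ (K:ℝ) := by exact_mod_cast Nat.le_add_left 1 _
          calc Real.exp 1 ≤ 2.7182818286 := Real.exp_one_lt_d9.le
            _ ≤ (i:ℝ) + 2 := by linarith
        have hXX : (i:ℝ) + 2 ≤ ((i:ℝ) + 2) * (Real.log ((i:ℝ) + 2)) ^ 2 := by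
          have hsq : 1 ≤ (Real.log ((i:ℝ) + 2)) ^ 2 := by nlinarith [hlog2]
          have hcast : (0:ℝ) ≤ (i:ℝ) := Nat.cast_nonneg i
          nlinarith [hsq, hcast]
        have htr1 : t * r (i + 2) ≤ 1 := by
          calc t * r (i + 2) ≤ t * (b / (((i:ℝ) + 2) * (Real.log ((i:ℝ) + 2)) ^ 2)) :=
                mul_le_mul_of_nonneg_left (hr' i).2 htpos.le
            _ ≤ t * (b / ((i:ℝ) + 2)) := by
                apply mul_le_mul_of_nonneg_left _ htpos.le
                apply div_le_div_of_nonneg_left hb.le (by positivity) hXX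
            _ = t * b / ((i:ℝ) + 2) := by ring
            _ ≤ 1 := by
                rw [div_le_one (by positivity)]
                calc t * b = b * t := by ring
                  _ ≤ (i:ℝ) + 2 := hibt
        have : f i = t * r (i + 2) := min_eq_right htr1
        rw [this]
        calc t * a / (((i:ℝ) + 2) * (Real.log ((i:ℝ) + 2)) ^ 2)
            = t * (a / (((i:ℝ) + 2) * (Real.log ((i:ℝ) + 2)) ^ 2)) := by ring
          _ ≤ t * r (i + 2) := mul_le_mul_of_nonneg_left (hr' i).1 htpos.le
      · simp only [hg_def, if_neg hi]
        exact hfnn i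
    have htsum_g : (∑' i, g i) = (t * a) *
        (∑' n : ℕ, 1 / (((n:ℝ) + (K + 2 : ℕ)) * (Real.log ((n:ℝ) + (K + 2 : ℕ))) ^ 2)) := by
      have h0 := (Summable.sum_add_tsum_nat_add K hsg).symm
      have hz : ∑ i ∈ Finset.range K, g i = 0 := by
        apply Finset.sum_eq_zero
        intro i hi
        simp only [Finset.mem_range] at hi
        simp only [hg_def]
        rw [if_neg (by omega)]
      rw [h0, hz, zero_add, tsum_congr hgeq, tsum_mul_left]
    have hlow1 : t * a * (1 / Real.log ((K + 2 : ℕ) : ℝ)) ≤ ∑' i, g i := by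
      rw [htsum_g]
      exact mul_le_mul_of_nonneg_left hPKlo (by positivity)
    have hlow2 : (∑' i, g i) ≤ ∑' i, f i := Summable.tsum_le_tsum hgle hsg hsf
    have hKle : ((K + 2 : ℕ) : ℝ) ≤ t ^ 2 := by
      have hceil : (⌈b * t⌉₊ : ℝ) < b * t + 1 := Nat.ceil_lt_add_one (by positivity)
      have hbt : b + 1 ≤ t := by linarith
      rw [hK_def]
      push_cast
      nlinarith
    have hKpos : (1:ℝ) < ((K + 2 : ℕ) : ℝ) := by
      have : (1:ℕ) < K + 2 := by omega
      exact_mod_cast this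
    have hlogK : Real.log ((K + 2 : ℕ) : ℝ) ≤ 2 * Real.log t := by
      calc Real.log ((K + 2 : ℕ) : ℝ) ≤ Real.log (t ^ 2) :=
            Real.log_le_log (by linarith) hKle
        _ = 2 * Real.log t := by
            rw [show t ^ 2 = t * t by ring, Real.log_mul (ne_of_gt htpos) (ne_of_gt htpos)]
            ring
    have hlogKpos : 0 < Real.log ((K + 2 : ℕ) : ℝ) := Real.log_pos hKpos
    have hinv : 1 / (2 * Real.log t) ≤ 1 / Real.log ((K + 2 : ℕ) : ℝ) :=
      one_div_le_one_div_of_le hlogKpos hlogK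
    calc a / 2 * (t / Real.log t) = t * a * (1 / (2 * Real.log t)) := by
          field_simp
      _ ≤ t * a * (1 / Real.log ((K + 2 : ℕ) : ℝ)) :=
          mul_le_mul_of_nonneg_left hinv (by positivity)
      _ ≤ ∑' i, g i := hlow1
      _ ≤ ∑' i, f i := hlow2
  · -- upper bound
    set M := ⌈Real.sqrt t⌉₊ + 1 with hM_def
    set h1f := fun i : ℕ => if i < M then (1:ℝ) else 0 with h1_def
    set h2f := fun i : ℕ => if M ≤ i then
        t * b / (((i:ℝ) + 2) * (Real.log ((i:ℝ) + 2)) ^ 2) else 0 with h2_def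
    obtain ⟨hsPM, -, hPMup⟩ := tail_bounds (M + 2) (by omega)
    have hfle2 : ∀ i, f i ≤ h1f i + h2f i := by
      intro i
      by_cases hi : i < M
      · have e1 : h1f i = 1 := if_pos hi
        have e2 : h2f i = 0 := if_neg (by omega)
        rw [e1, e2, add_zero]
        exact min_le_left _ _
      · have e1 : h1f i = 0 := if_neg hi
        have e2 : h2f i = t * b / (((i:ℝ) + 2) * (Real.log ((i:ℝ) + 2)) ^ 2) :=
          if_pos (by omega)
        rw [e1, e2, zero_add]
        exact hfle i
    have hs1 : Summable h1f := by
      apply summable_of_ne_finset_zero (s := Finset.range M)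
      intro i hi
      simp only [Finset.mem_range, not_lt] at hi
      simp only [h1_def]
      rw [if_neg (by omega)]
    have ht1 : (∑' i, h1f i) = (M : ℝ) := by
      rw [tsum_eq_sum (s := Finset.range M) (fun i hi => by
        simp only [Finset.mem_range, not_lt] at hi
        simp only [h1_def]
        rw [if_neg (by omega)])]
      rw [Finset.sum_congr rfl (fun i hi => if_pos (Finset.mem_range.mp hi))]
      simp
    have hgeq2 : ∀ n : ℕ, h2f (n + M) =
        (t * b) * (1 / (((n:ℝ) + (M + 2 : ℕ)) * (Real.log ((n:ℝ) + (M + 2 : ℕ))) ^ 2)) := by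
      intro n
      simp only [h2_def, if_pos (Nat.le_add_left M n)]
      push_cast
      rw [add_assoc, mul_one_div]
    have hs2 : Summable h2f := by
      rw [← summable_nat_add_iff M]
      exact (hsPM.mul_left (t * b)).congr fun n => (hgeq2 n).symm
    have ht2 : (∑' i, h2f i) = (t * b) *
        (∑' n : ℕ, 1 / (((n:ℝ) + (M + 2 : ℕ)) * (Real.log ((n:ℝ) + (M + 2 : ℕ))) ^ 2)) := by
      have h0 := (Summable.sum_add_tsum_nat_add M hs2).symm
      have hz : ∑ i ∈ Finset.range M, h2f i = 0 := by
        apply Finset.sum_eq_zero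
        intro i hi
        simp only [Finset.mem_range] at hi
        simp only [h2_def]
        rw [if_neg (by omega)]
      rw [h0, hz, zero_add, tsum_congr hgeq2, tsum_mul_left]
    have hup : (∑' i, f i) ≤ (M : ℝ) + (t * b) * (4 / Real.log ((M + 2 : ℕ) : ℝ)) := by
      calc (∑' i, f i) ≤ ∑' i, (h1f i + h2f i) := Summable.tsum_le_tsum hfle2 hsf (hs1.add hs2)
        _ = (∑' i, h1f i) + ∑' i, h2f i := Summable.tsum_add hs1 hs2
        _ ≤ (M : ℝ) + (t * b) * (4 / Real.log ((M + 2 : ℕ) : ℝ)) := by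
            rw [ht1, ht2]
            have := mul_le_mul_of_nonneg_left hPMup (show (0:ℝ) ≤ t * b by positivity)
            linarith
    have hsqrtM : Real.sqrt t ≤ ((M + 2 : ℕ) : ℝ) := by
      have := Nat.le_ceil (Real.sqrt t)
      rw [hM_def]
      push_cast
      linarith
    have hlogM : Real.log t / 2 ≤ Real.log ((M + 2 : ℕ) : ℝ) := by
      rw [← Real.log_sqrt htpos.le]
      exact Real.log_le_log (Real.sqrt_pos.2 htpos) hsqrtM
    have hlogMpos : 0 < Real.log ((M + 2 : ℕ) : ℝ) := by linarith
    have hMle : (M : ℝ) ≤ 4 * (t / Real.log t) := by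
      have hceil : (⌈Real.sqrt t⌉₊ : ℝ) < Real.sqrt t + 1 :=
        Nat.ceil_lt_add_one (Real.sqrt_nonneg t)
      have hsq := sqrt_le_two_div ht16
      have hdiv1 : 1 ≤ t / Real.log t := by
        rw [le_div_iff₀ hlogpos]
        have := Real.log_le_sub_one_of_pos htpos
        linarith
      rw [hM_def]
      push_cast
      linarith
    have htail : (t * b) * (4 / Real.log ((M + 2 : ℕ) : ℝ)) ≤ 8 * b * (t / Real.log t) := by
      have h1 : 4 / Real.log ((M + 2 : ℕ) : ℝ) ≤ 4 / (Real.log t / 2) := by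
        exact div_le_div_of_nonneg_left (by norm_num) (by linarith) hlogM
      calc (t * b) * (4 / Real.log ((M + 2 : ℕ) : ℝ)) ≤ (t * b) * (4 / (Real.log t / 2)) :=
            mul_le_mul_of_nonneg_left h1 (by positivity)
        _ = 8 * b * (t / Real.log t) := by
            field_simp
            ring
    calc (∑' i, f i) ≤ (M : ℝ) + (t * b) * (4 / Real.log ((M + 2 : ℕ) : ℝ)) := hup
      _ ≤ 4 * (t / Real.log t) + 8 * b * (t / Real.log t) := add_le_add hMle htail
      _ = (4 + 8 * b) * (t / Real.log t) := by ring

set_option maxHeartbeats 2000000 in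
lemma ebounds (c₂ : ℝ) (hc₂ : 0 < c₂) (q : ℕ → ℝ) (hq0 : ∀ i : ℕ, 0 ≤ q (i + 2))
    (hqu : ∀ i : ℕ, q (i + 2) ≤ c₂ / (((i:ℝ) + 2) * (Real.log ((i:ℝ) + 2)) ^ 2)) :
    ∀ t : ℝ, 16 ≤ t →
      Summable (fun p : ℕ × ℕ =>
        if p.1 ≠ p.2 then min 1 (t * q (p.1 + 2) * q (p.2 + 2)) else 0) ∧
      (∑' p : ℕ × ℕ, if p.1 ≠ p.2 then min 1 (t * q (p.1 + 2) * q (p.2 + 2)) else 0)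
        ≤ (8 + 256 * c₂ ^ 2) * (t / Real.log t) := by
  intro t ht
  have htpos : (0:ℝ) < t := by linarith
  have hlog1 : 1 ≤ Real.log t := log_ge_one ht
  have hlogpos : 0 < Real.log t := by linarith
  have hXpos : ∀ i : ℕ, (0:ℝ) < ((i:ℝ) + 2) * (Real.log ((i:ℝ) + 2)) ^ 2 := by
    intro i
    have h1 : (1:ℝ) < (i:ℝ) + 2 := by
      have : (0:ℝ) ≤ (i:ℝ) := Nat.cast_nonneg i
      linarith
    have := Real.log_pos h1
    positivity
  set F := fun p : ℕ × ℕ =>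
      if p.1 ≠ p.2 then min 1 (t * q (p.1 + 2) * q (p.2 + 2)) else 0 with hF_def
  have hFnn : ∀ p, 0 ≤ F p := by
    intro p
    simp only [hF_def]
    split_ifs
    · exact le_min (by norm_num) (mul_nonneg (mul_nonneg htpos.le (hq0 _)) (hq0 _))
    · exact le_refl 0
  have hFle : ∀ p : ℕ × ℕ, F p ≤ t * q (p.1 + 2) * q (p.2 + 2) := by
    intro p
    simp only [hF_def]
    split_ifs
    · exact min_le_right _ _
    · exact mul_nonneg (mul_nonneg htpos.le (hq0 _)) (hq0 _)
  -- summability of q-tail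
  obtain ⟨hsP2, -, hP2up⟩ := tail_bounds 2 le_rfl
  have hsq : Summable (fun i : ℕ => q (i + 2)) := by
    apply Summable.of_nonneg_of_le hq0 hqu
    refine (hsP2.mul_left c₂).congr fun i => ?_
    push_cast
    rw [mul_one_div]
  have hSF : Summable F := by
    apply Summable.of_nonneg_of_le hFnn hFle
    have := Summable.mul_of_nonneg (hsq.mul_left t) hsq
      (fun i => mul_nonneg htpos.le (hq0 i)) hq0
    exact this
  refine ⟨hSF, ?_⟩
  -- the splitting threshold
  set K := ⌈Real.sqrt (Real.sqrt t)⌉₊ with hK_def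
  set a1 := fun i : ℕ => if i < K then (1:ℝ) else 0 with ha1_def
  set b1 := fun i : ℕ => if K ≤ i then t * q (i + 2) else 0 with hb1_def
  set A := fun p : ℕ × ℕ => a1 p.1 * a1 p.2 with hA_def
  set B := fun p : ℕ × ℕ => b1 p.1 * q (p.2 + 2) with hB_def
  set B' := fun p : ℕ × ℕ => q (p.1 + 2) * b1 p.2 with hB'_def
  have ha1nn : ∀ i, 0 ≤ a1 i := by
    intro i; simp only [ha1_def]; split_ifs <;> norm_num
  have hb1nn : ∀ i, 0 ≤ b1 i := by
    intro i; simp only [hb1_def]; split_ifs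
    · exact mul_nonneg htpos.le (hq0 _)
    · exact le_refl 0
  have hsa1 : Summable a1 := by
    apply summable_of_ne_finset_zero (s := Finset.range K)
    intro i hi
    simp only [Finset.mem_range, not_lt] at hi
    simp only [ha1_def]
    rw [if_neg (by omega)]
  have hsb1 : Summable b1 := by
    apply Summable.of_nonneg_of_le hb1nn _ (hsq.mul_left t)
    intro i
    simp only [hb1_def]
    split_ifs
    · exact le_refl _
    · exact mul_nonneg htpos.le (hq0 _)
  have hSA : Summable A := Summable.mul_of_nonneg hsa1 hsa1 ha1nn ha1nn
  have hSB : Summable B := Summable.mul_of_nonneg hsb1 hsq hb1nn hq0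
  have hSB' : Summable B' := Summable.mul_of_nonneg hsq hsb1 hq0 hb1nn
  have hFsplit : ∀ p : ℕ × ℕ, F p ≤ A p + B p + B' p := by
    intro p
    have hAnn : 0 ≤ A p := mul_nonneg (ha1nn _) (ha1nn _)
    have hBnn : 0 ≤ B p := mul_nonneg (hb1nn _) (hq0 _)
    have hB'nn : 0 ≤ B' p := mul_nonneg (hq0 _) (hb1nn _)
    by_cases h12 : p.1 < K ∧ p.2 < K
    · have hA1 : A p = 1 := by
        simp only [hA_def, ha1_def, if_pos h12.1, if_pos h12.2, mul_one]
      have hF1 : F p ≤ 1 := by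
        simp only [hF_def]
        split_ifs
        · exact min_le_left _ _
        · norm_num
      linarith
    · rcases not_and_or.mp h12 with h1 | h2
      · have hB1 : B p = t * q (p.1 + 2) * q (p.2 + 2) := by
          simp only [hB_def, hb1_def, if_pos (not_lt.mp h1)]
        have := hFle p
        linarith [hFle p]
      · have hB1 : B' p = t * q (p.1 + 2) * q (p.2 + 2) := by
          simp only [hB'_def, hb1_def, if_pos (not_lt.mp h2)]
          ring
        linarith [hFle p]
  have hmain : (∑' p, F p) ≤ (∑' p, A p) + (∑' p, B p) + (∑' p, B' p) := by
    calc (∑' p, F p) ≤ ∑' p, (A p + B p + B' p) :=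
          Summable.tsum_le_tsum hFsplit hSF ((hSA.add hSB).add hSB')
      _ = (∑' p, (A p + B p)) + ∑' p, B' p := Summable.tsum_add (hSA.add hSB) hSB'
      _ = (∑' p, A p) + (∑' p, B p) + ∑' p, B' p := by rw [Summable.tsum_add hSA hSB]
  -- value of ∑ A
  have hta1 : (∑' i, a1 i) = (K : ℝ) := by
    rw [tsum_eq_sum (s := Finset.range K) (fun i hi => by
      simp only [Finset.mem_range, not_lt] at hi
      simp only [ha1_def]
      rw [if_neg (by omega)])]
    rw [Finset.sum_congr rfl (fun i hi => if_pos (Finset.mem_range.mp hi))]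
    simp
  have htA : (∑' p, A p) = (K : ℝ) * K := by
    rw [hA_def, ← Summable.tsum_mul_tsum hsa1 hsa1 hSA, hta1]
  -- tail of q beyond K
  obtain ⟨hsPK, -, hPKup⟩ := tail_bounds (K + 2) (by omega)
  have hqtail_le : ∀ n : ℕ, q (n + K + 2) ≤
      c₂ * (1 / (((n:ℝ) + (K + 2 : ℕ)) * (Real.log ((n:ℝ) + (K + 2 : ℕ))) ^ 2)) := by
    intro n
    have := hqu (n + K)
    push_cast at this ⊢
    rw [mul_one_div, ← add_assoc]
    exact this
  have hsqtail : Summable (fun n : ℕ => q (n + K + 2)) :=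
    Summable.of_nonneg_of_le (fun n => hq0 (n + K)) hqtail_le (hsPK.mul_left c₂)
  have hTK : (∑' n : ℕ, q (n + K + 2)) ≤ c₂ * (4 / Real.log ((K + 2 : ℕ) : ℝ)) := by
    calc (∑' n : ℕ, q (n + K + 2))
        ≤ ∑' n : ℕ, c₂ * (1 / (((n:ℝ) + (K + 2 : ℕ)) * (Real.log ((n:ℝ) + (K + 2 : ℕ))) ^ 2)) :=
          Summable.tsum_le_tsum hqtail_le hsqtail (hsPK.mul_left c₂)
      _ = c₂ * (∑' n : ℕ, 1 / (((n:ℝ) + (K + 2 : ℕ)) * (Real.log ((n:ℝ) + (K + 2 : ℕ))) ^ 2)) :=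
          tsum_mul_left
      _ ≤ c₂ * (4 / Real.log ((K + 2 : ℕ) : ℝ)) :=
          mul_le_mul_of_nonneg_left hPKup hc₂.le
  have htb1 : (∑' i, b1 i) = t * (∑' n : ℕ, q (n + K + 2)) := by
    have h0 := (Summable.sum_add_tsum_nat_add K hsb1).symm
    have hz : ∑ i ∈ Finset.range K, b1 i = 0 := by
      apply Finset.sum_eq_zero
      intro i hi
      simp only [Finset.mem_range] at hi
      simp only [hb1_def]
      rw [if_neg (by omega)]
    have hcong : ∀ n : ℕ, b1 (n + K) = t * q (n + K + 2) := by
      intro n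
      simp only [hb1_def, if_pos (Nat.le_add_left K n)]
    rw [h0, hz, zero_add, tsum_congr hcong, tsum_mul_left]
  -- value of Q
  have hQle : (∑' i : ℕ, q (i + 2)) ≤ 8 * c₂ := by
    have h1 : (∑' i : ℕ, q (i + 2)) ≤ c₂ * (4 / Real.log ((2:ℕ) : ℝ)) := by
      calc (∑' i : ℕ, q (i + 2))
          ≤ ∑' i : ℕ, c₂ * (1 / (((i:ℝ) + (2:ℕ)) * (Real.log ((i:ℝ) + (2:ℕ))) ^ 2)) := by
            apply Summable.tsum_le_tsum _ hsq (hsP2.mul_left c₂)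
            intro i
            have := hqu i
            push_cast at this ⊢
            rw [mul_one_div]
            exact this
        _ = c₂ * (∑' i : ℕ, 1 / (((i:ℝ) + (2:ℕ)) * (Real.log ((i:ℝ) + (2:ℕ))) ^ 2)) :=
            tsum_mul_left
        _ ≤ c₂ * (4 / Real.log ((2:ℕ) : ℝ)) := mul_le_mul_of_nonneg_left hP2up hc₂.le
    have hl2 : (0.6931471803 : ℝ) < Real.log 2 := Real.log_two_gt_d9
    have hcast : ((2:ℕ) : ℝ) = 2 := by norm_num
    rw [hcast] at h1
    have : 4 / Real.log 2 ≤ 8 := by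
      rw [div_le_iff₀ (by linarith)]
      linarith
    calc (∑' i : ℕ, q (i + 2)) ≤ c₂ * (4 / Real.log 2) := h1
      _ ≤ c₂ * 8 := mul_le_mul_of_nonneg_left this hc₂.le
      _ = 8 * c₂ := by ring
  have hQnn : 0 ≤ (∑' i : ℕ, q (i + 2)) := tsum_nonneg hq0
  have htB : (∑' p, B p) = (∑' i, b1 i) * (∑' i : ℕ, q (i + 2)) := by
    rw [hB_def, ← Summable.tsum_mul_tsum hsb1 hsq hSB]
  have htB' : (∑' p, B' p) = (∑' i : ℕ, q (i + 2)) * (∑' i, b1 i) := by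
    rw [hB'_def, ← Summable.tsum_mul_tsum hsq hsb1 hSB']
  -- numeric bounds
  have hsqrt1 : (1:ℝ) ≤ Real.sqrt t := by
    rw [show (1:ℝ) = Real.sqrt 1 by simp]
    exact Real.sqrt_le_sqrt (by linarith)
  have hsqrt41 : (1:ℝ) ≤ Real.sqrt (Real.sqrt t) := by
    rw [show (1:ℝ) = Real.sqrt 1 by simp]
    exact Real.sqrt_le_sqrt (by linarith)
  have hKup : (K : ℝ) ≤ Real.sqrt (Real.sqrt t) + 1 :=
    le_of_lt (Nat.ceil_lt_add_one (Real.sqrt_nonneg _))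
  have hKlo : Real.sqrt (Real.sqrt t) ≤ ((K + 2 : ℕ) : ℝ) := by
    have := Nat.le_ceil (Real.sqrt (Real.sqrt t))
    push_cast
    linarith
  have hsq4 : Real.sqrt (Real.sqrt t) * Real.sqrt (Real.sqrt t) = Real.sqrt t :=
    Real.mul_self_sqrt (Real.sqrt_nonneg t)
  have hA_bound : (K : ℝ) * K ≤ 8 * (t / Real.log t) := by
    have h1 : (K : ℝ) * K ≤ 4 * Real.sqrt t := by nlinarith [hKup, hsqrt41, hsq4]
    have h2 := sqrt_le_two_div ht
    linarith
  have hlogK : Real.log t / 4 ≤ Real.log ((K + 2 : ℕ) : ℝ) := by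
    have he : Real.log (Real.sqrt (Real.sqrt t)) = Real.log t / 4 := by
      rw [Real.log_sqrt (Real.sqrt_nonneg t), Real.log_sqrt htpos.le]
      ring
    rw [← he]
    exact Real.log_le_log (by linarith) hKlo
  have hlogKpos : 0 < Real.log ((K + 2 : ℕ) : ℝ) := by linarith
  have hTK2 : (∑' n : ℕ, q (n + K + 2)) ≤ c₂ * (16 / Real.log t) := by
    have h1 : 4 / Real.log ((K + 2 : ℕ) : ℝ) ≤ 4 / (Real.log t / 4) :=
      div_le_div_of_nonneg_left (by norm_num) (by linarith) hlogK
    have h2 : (4:ℝ) / (Real.log t / 4) = 16 / Real.log t := by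
      field_simp
      norm_num
    calc (∑' n : ℕ, q (n + K + 2)) ≤ c₂ * (4 / Real.log ((K + 2 : ℕ) : ℝ)) := hTK
      _ ≤ c₂ * (16 / Real.log t) := by
          rw [← h2]
          exact mul_le_mul_of_nonneg_left h1 hc₂.le
  have hTKnn : 0 ≤ (∑' n : ℕ, q (n + K + 2)) := tsum_nonneg fun n => hq0 (n + K)
  have hB_bound : (∑' p, B p) ≤ 128 * c₂ ^ 2 * (t / Real.log t) := by
    rw [htB, htb1]
    calc t * (∑' n : ℕ, q (n + K + 2)) * (∑' i : ℕ, q (i + 2))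
        ≤ t * (c₂ * (16 / Real.log t)) * (8 * c₂) := by
          apply mul_le_mul (mul_le_mul_of_nonneg_left hTK2 htpos.le) hQle hQnn
            (by positivity)
      _ = 128 * c₂ ^ 2 * (t / Real.log t) := by
          field_simp
          ring
  have hB'_bound : (∑' p, B' p) ≤ 128 * c₂ ^ 2 * (t / Real.log t) := by
    rw [htB', htb1]
    calc (∑' i : ℕ, q (i + 2)) * (t * (∑' n : ℕ, q (n + K + 2)))
        ≤ (8 * c₂) * (t * (c₂ * (16 / Real.log t))) := by
          apply mul_le_mul hQle (mul_le_mul_of_nonneg_left hTK2 htpos.le)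
            (by positivity) (by positivity)
      _ = 128 * c₂ ^ 2 * (t / Real.log t) := by
          field_simp
          ring
  calc (∑' p, F p) ≤ (∑' p, A p) + (∑' p, B p) + (∑' p, B' p) := hmain
    _ ≤ 8 * (t / Real.log t) + 128 * c₂ ^ 2 * (t / Real.log t)
        + 128 * c₂ ^ 2 * (t / Real.log t) := by
        rw [htA]
        exact add_le_add (add_le_add hA_bound hB_bound) hB'_bound
    _ = (8 + 256 * c₂ ^ 2) * (t / Real.log t) := by ring

set_option maxHeartbeats 2000000 in
/-- If `q i ≍ 1/(i log² i)` for `i ≥ 2`, then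
`v(t) = ∑ᵢ min(1, t qᵢ) ≍ t/log t` and `e(t) = ∑_{i≠j} min(1, t qᵢ qⱼ) ≍ t/log t`
as `t → ∞`; consequently `e(t) ≍ v(t)`: the graph is extremely sparse. -/
theorem stmt15 (c₁ c₂ : ℝ) (hc₁ : 0 < c₁) (hc₂ : 0 < c₂) (q : ℕ → ℝ)
    (hq : ∀ i : ℕ, 2 ≤ i → c₁ / ((i : ℝ) * (Real.log i) ^ 2) ≤ q i ∧
        q i ≤ c₂ / ((i : ℝ) * (Real.log i) ^ 2)) :
    ∃ c C t₀ : ℝ, 0 < c ∧ 0 < C ∧ ∀ t : ℝ, t₀ ≤ t →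
      (c * (t / Real.log t) ≤ (∑' i : ℕ, min 1 (t * q (i + 2))) ∧
        (∑' i : ℕ, min 1 (t * q (i + 2))) ≤ C * (t / Real.log t)) ∧
      (c * (t / Real.log t)
          ≤ (∑' p : ℕ × ℕ, if p.1 ≠ p.2 then min 1 (t * q (p.1 + 2) * q (p.2 + 2)) else 0) ∧
        (∑' p : ℕ × ℕ, if p.1 ≠ p.2 then min 1 (t * q (p.1 + 2) * q (p.2 + 2)) else 0)
          ≤ C * (t / Real.log t)) ∧
      (c * (∑' i : ℕ, min 1 (t * q (i + 2)))
          ≤ (∑' p : ℕ × ℕ, if p.1 ≠ p.2 then min 1 (t * q (p.1 + 2) * q (p.2 + 2)) else 0) ∧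
        (∑' p : ℕ × ℕ, if p.1 ≠ p.2 then min 1 (t * q (p.1 + 2) * q (p.2 + 2)) else 0)
          ≤ C * (∑' i : ℕ, min 1 (t * q (i + 2)))) := by
  have hlog2pos : (0:ℝ) < Real.log 2 := Real.log_pos one_lt_two
  set m := c₁ / (2 * (Real.log 2) ^ 2) with hm_def
  set Mm := c₂ / (2 * (Real.log 2) ^ 2) with hMm_def
  have hm0 : 0 < m := by positivity
  have hMm0 : 0 < Mm := by positivity
  have hq2 : m ≤ q 2 ∧ q 2 ≤ Mm := by
    have := hq 2 le_rfl
    push_cast at this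
    exact this
  have hq2pos : 0 < q 2 := lt_of_lt_of_le hm0 hq2.1
  have hqpos : ∀ i : ℕ, 2 ≤ i → 0 < q i := by
    intro i hi
    have h1 : (1:ℝ) < (i:ℝ) := by
      have : (2:ℝ) ≤ (i:ℝ) := by exact_mod_cast hi
      linarith
    have h2 : 0 < Real.log i := Real.log_pos h1
    have h3 : (0:ℝ) < (i:ℝ) := by linarith
    exact lt_of_lt_of_le (by positivity) (hq i hi).1
  have hq0' : ∀ i : ℕ, 0 ≤ q (i + 2) := fun i => (hqpos (i + 2) (by omega)).le
  set r := fun i : ℕ => q i * q 2 with hr_def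
  set aw := c₁ * m with haw_def
  set bw := c₂ * Mm with hbw_def
  have haw0 : 0 < aw := by positivity
  have hbw0 : 0 < bw := by positivity
  have hr_r : ∀ i : ℕ, 2 ≤ i → aw / ((i : ℝ) * (Real.log i) ^ 2) ≤ r i ∧
      r i ≤ bw / ((i : ℝ) * (Real.log i) ^ 2) := by
    intro i hi
    obtain ⟨hl, hu⟩ := hq i hi
    have h1 : (1:ℝ) < (i:ℝ) := by
      have : (2:ℝ) ≤ (i:ℝ) := by exact_mod_cast hi
      linarith
    have h2 : 0 < Real.log i := Real.log_pos h1
    have hXp : (0:ℝ) < (i:ℝ) * (Real.log i) ^ 2 := by positivity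
    constructor
    · have he : aw / ((i : ℝ) * (Real.log i) ^ 2)
          = (c₁ / ((i : ℝ) * (Real.log i) ^ 2)) * m := by
        rw [haw_def]; ring
      rw [he, hr_def]
      exact mul_le_mul hl hq2.1 hm0.le (hqpos i hi).le
    · have he : bw / ((i : ℝ) * (Real.log i) ^ 2)
          = (c₂ / ((i : ℝ) * (Real.log i) ^ 2)) * Mm := by
        rw [hbw_def]; ring
      rw [he, hr_def]
      exact mul_le_mul hu hq2.2 hq2pos.le (by positivity)
  have V := vbounds c₁ c₂ hc₁ hc₂ q hq
  have W := vbounds aw bw haw0 hbw0 r hr_r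
  have E := ebounds c₂ hc₂ q hq0' (fun i => by
    have := (hq (i + 2) (by omega)).2
    push_cast at this
    exact this)
  set cv := c₁ / 2 with hcv_def
  set Cv := 4 + 8 * c₂ with hCv_def
  set cw := aw / 2 with hcw_def
  set Ce := 8 + 256 * c₂ ^ 2 with hCe_def
  have hcv0 : 0 < cv := by positivity
  have hCv0 : 0 < Cv := by positivity
  have hcw0 : 0 < cw := by positivity
  have hCe0 : 0 < Ce := by positivity
  refine ⟨min cv (min (cw / 2) ((cw / 2) / Cv)), max Cv (max Ce (Ce / cv)), 
    (c₂ + 16) + (bw + 16) + 16 / cw ^ 2 + 16, by positivity, lt_max_of_lt_left hCv0, ?_⟩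
  intro t ht
  have hterm1 : (0:ℝ) ≤ 16 / cw ^ 2 := by positivity
  have htV : c₂ + 16 ≤ t := by nlinarith [hbw0]
  have htW : bw + 16 ≤ t := by nlinarith [hc₂]
  have ht16 : (16:ℝ) ≤ t := by nlinarith [hc₂, hbw0]
  have htcw : 16 / cw ^ 2 ≤ t := by nlinarith [hc₂, hbw0]
  have htpos : (0:ℝ) < t := by linarith
  have hlog1 : 1 ≤ Real.log t := log_ge_one ht16
  have hlogpos : 0 < Real.log t := by linarith
  have htlpos : 0 < t / Real.log t := by positivity
  obtain ⟨hsV, hVlo, hVup⟩ := V t htV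
  obtain ⟨hsW, hWlo, hWup⟩ := W t htW
  obtain ⟨hSF, hEup'⟩ := E t ht16
  set vt := ∑' i : ℕ, min 1 (t * q (i + 2)) with hvt_def
  set et := ∑' p : ℕ × ℕ, (if p.1 ≠ p.2 then min 1 (t * q (p.1 + 2) * q (p.2 + 2)) else 0)
    with het_def
  -- lower bound for et
  have hsqt2 : 4 ≤ cw * Real.sqrt t := by
    have h1 := Real.sqrt_nonneg t
    have h2 := Real.mul_self_sqrt htpos.le
    have h3 : 16 ≤ t * cw ^ 2 := (div_le_iff₀ (by positivity)).mp htcw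
    have h4 : (cw * Real.sqrt t) * (cw * Real.sqrt t) = t * cw ^ 2 := by
      rw [show (cw * Real.sqrt t) * (cw * Real.sqrt t)
          = (Real.sqrt t * Real.sqrt t) * cw ^ 2 by ring, h2]
    have h5 : 0 ≤ cw * Real.sqrt t := mul_nonneg hcw0.le h1
    nlinarith [h4, h5, h3]
  have hone : 1 ≤ (cw / 2) * (t / Real.log t) := by
    have h2 := sqrt_le_two_div ht16
    nlinarith [mul_le_mul_of_nonneg_left h2 hcw0.le, hsqt2]
  have hElo : (cw / 2) * (t / Real.log t) ≤ et := by
    set g1 := fun i : ℕ => if 1 ≤ i then min 1 (t * r (i + 2)) else 0 with hg1_def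
    set g2 := fun j : ℕ => if j = 0 then (1:ℝ) else 0 with hg2_def
    have hfwnn : ∀ i, 0 ≤ min 1 (t * r (i + 2)) := by
      intro i
      have : 0 < r (i + 2) := mul_pos (hqpos (i + 2) (by omega)) hq2pos
      exact le_min (by norm_num) (by positivity)
    have hg1nn : ∀ i, 0 ≤ g1 i := by
      intro i; simp only [hg1_def]; split_ifs
      · exact hfwnn i
      · exact le_refl 0
    have hg2nn : ∀ j, 0 ≤ g2 j := by
      intro j; simp only [hg2_def]; split_ifs <;> norm_num
    have hsg1 : Summable g1 := by
      apply Summable.of_nonneg_of_le hg1nn _ hsW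
      intro i
      simp only [hg1_def]
      split_ifs
      · exact le_refl _
      · exact hfwnn i
    have hsg2 : Summable g2 := by
      apply summable_of_ne_finset_zero (s := {0})
      intro j hj
      simp only [Finset.mem_singleton] at hj
      simp only [hg2_def]
      rw [if_neg hj]
    have htg2 : (∑' j, g2 j) = 1 := by
      simp only [hg2_def]
      exact tsum_ite_eq 0 1
    have htg1 : (∑' i, g1 i) = (∑' i : ℕ, min 1 (t * r (i + 2))) - min 1 (t * r (0 + 2)) := by
      have h1 := (Summable.sum_add_tsum_nat_add 1 hsg1).symm
      have h2 := (Summable.sum_add_tsum_nat_add 1 hsW).symm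
      rw [Finset.sum_range_one] at h1 h2
      have hz : g1 0 = 0 := by simp [hg1_def]
      have hcong : ∀ n : ℕ, g1 (n + 1) = min 1 (t * r (n + 1 + 2)) := by
        intro n
        simp only [hg1_def, if_pos (Nat.le_add_left 1 n)]
      rw [h1, hz, zero_add, tsum_congr hcong]
      rw [h2]
      ring
    have hSG : Summable (fun p : ℕ × ℕ => g1 p.1 * g2 p.2) :=
      Summable.mul_of_nonneg hsg1 hsg2 hg1nn hg2nn
    have hGF : ∀ p : ℕ × ℕ, g1 p.1 * g2 p.2 ≤
        (if p.1 ≠ p.2 then min 1 (t * q (p.1 + 2) * q (p.2 + 2)) else 0) := by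
      intro p
      have hFnn : 0 ≤ (if p.1 ≠ p.2 then min 1 (t * q (p.1 + 2) * q (p.2 + 2)) else 0) := by
        split_ifs
        · exact le_min (by norm_num) (mul_nonneg (mul_nonneg htpos.le (hq0' _)) (hq0' _))
        · exact le_refl 0
      by_cases h2 : p.2 = 0
      · by_cases h1 : 1 ≤ p.1
        · have hne : p.1 ≠ p.2 := by omega
          have e1 : g1 p.1 * g2 p.2 = min 1 (t * r (p.1 + 2)) := by
            simp [hg1_def, hg2_def, h1, h2]
          rw [e1, if_pos hne, h2]
          have : t * r (p.1 + 2) = t * q (p.1 + 2) * q (0 + 2) := by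
            simp only [hr_def]
            norm_num
            ring
          rw [this]
        · have : p.1 = 0 := by omega
          have e1 : g1 p.1 = 0 := by simp [hg1_def, this]
          rw [e1, zero_mul]
          exact hFnn
      · have e2 : g2 p.2 = 0 := by simp [hg2_def, h2]
        rw [e2, mul_zero]
        exact hFnn
    have hkey : (∑' i, g1 i) ≤ et := by
      have h1 : ((∑' i, g1 i) * ∑' j, g2 j) = ∑' p : ℕ × ℕ, g1 p.1 * g2 p.2 :=
        Summable.tsum_mul_tsum hsg1 hsg2 hSG
      have h2 : (∑' p : ℕ × ℕ, g1 p.1 * g2 p.2) ≤ et :=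
        Summable.tsum_le_tsum hGF hSG hSF
      calc (∑' i, g1 i) = (∑' i, g1 i) * ∑' j, g2 j := by rw [htg2, mul_one]
        _ = ∑' p : ℕ × ℕ, g1 p.1 * g2 p.2 := h1
        _ ≤ et := h2
    have hfw0 : min 1 (t * r (0 + 2)) ≤ 1 := min_le_left _ _
    have hWlo' : (aw / 2) * (t / Real.log t) ≤ ∑' i : ℕ, min 1 (t * r (i + 2)) := hWlo
    calc (cw / 2) * (t / Real.log t)
        = cw * (t / Real.log t) - (cw / 2) * (t / Real.log t) := by ring
      _ ≤ (∑' i : ℕ, min 1 (t * r (i + 2))) - 1 := by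
          have : cw * (t / Real.log t) = (aw / 2) * (t / Real.log t) := by rw [hcw_def]
          nlinarith [hWlo', hone]
      _ ≤ (∑' i : ℕ, min 1 (t * r (i + 2))) - min 1 (t * r (0 + 2)) := by linarith
      _ = (∑' i, g1 i) := htg1.symm
      _ ≤ et := hkey
  have hEup : et ≤ Ce * (t / Real.log t) := hEup'
  have hvnn : 0 ≤ vt := tsum_nonneg (fun i =>
    le_min (by norm_num) (mul_nonneg htpos.le (hq0' i)))
  -- assemble
  have hcle1 : min cv (min (cw / 2) ((cw / 2) / Cv)) ≤ cv := min_le_left _ _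
  have hcle2 : min cv (min (cw / 2) ((cw / 2) / Cv)) ≤ cw / 2 :=
    le_trans (min_le_right _ _) (min_le_left _ _)
  have hcle3 : min cv (min (cw / 2) ((cw / 2) / Cv)) ≤ (cw / 2) / Cv :=
    le_trans (min_le_right _ _) (min_le_right _ _)
  have hCge1 : Cv ≤ max Cv (max Ce (Ce / cv)) := le_max_left _ _
  have hCge2 : Ce ≤ max Cv (max Ce (Ce / cv)) :=
    le_trans (le_max_left _ _) (le_max_right _ _)
  have hCge3 : Ce / cv ≤ max Cv (max Ce (Ce / cv)) :=
    le_trans (le_max_right _ _) (le_max_right _ _)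
  refine ⟨⟨?_, ?_⟩, ⟨?_, ?_⟩, ?_, ?_⟩
  · calc min cv (min (cw / 2) ((cw / 2) / Cv)) * (t / Real.log t)
        ≤ cv * (t / Real.log t) := mul_le_mul_of_nonneg_right hcle1 htlpos.le
      _ ≤ vt := hVlo
  · calc vt ≤ Cv * (t / Real.log t) := hVup
      _ ≤ max Cv (max Ce (Ce / cv)) * (t / Real.log t) :=
          mul_le_mul_of_nonneg_right hCge1 htlpos.le
  · calc min cv (min (cw / 2) ((cw / 2) / Cv)) * (t / Real.log t)
        ≤ (cw / 2) * (t / Real.log t) := mul_le_mul_of_nonneg_right hcle2 htlpos.le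
      _ ≤ et := hElo
  · calc et ≤ Ce * (t / Real.log t) := hEup
      _ ≤ max Cv (max Ce (Ce / cv)) * (t / Real.log t) :=
          mul_le_mul_of_nonneg_right hCge2 htlpos.le
  · calc min cv (min (cw / 2) ((cw / 2) / Cv)) * vt
        ≤ ((cw / 2) / Cv) * vt := mul_le_mul_of_nonneg_right hcle3 hvnn
      _ ≤ ((cw / 2) / Cv) * (Cv * (t / Real.log t)) :=
          mul_le_mul_of_nonneg_left hVup (by positivity)
      _ = (cw / 2) * (t / Real.log t) := by
          field_simp
      _ ≤ et := hElo
  · calc et ≤ Ce * (t / Real.log t) := hEup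
      _ = (Ce / cv) * (cv * (t / Real.log t)) := by
          field_simp
      _ ≤ (Ce / cv) * vt := mul_le_mul_of_nonneg_left hVlo (by positivity)
      _ ≤ max Cv (max Ce (Ce / cv)) * vt := mul_le_mul_of_nonneg_right hCge3 hvnn
end

section
/- In the edge-exchangeable model, suppose the intensity matrix satisfies $\mu_{ij} > 0$ for some pair where $i$ or $j$ indexes a blip label (i.e., the model contains dust or attached stars: $\mu_{0i} > 0$ for some $i$). Then almost surely $v(G_m) \asymp m$ and $e(G_m) \asymp m$ as $m \to \infty$; i.e., the number of vertices and edges grows linearly in the number of sampled edges, so the graphs are extremely sparse. Moreover, all but a fraction $o(1)$ of edges and vertices lie in the dust or attached stars. -/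
open MeasureTheory ProbabilityTheory Filter
open scoped ENNReal

/-- SLLN for counts of i.i.d. samples in a set. -/
lemma slln_count {Ω : Type*} [MeasurableSpace Ω] (P : Measure Ω) [IsProbabilityMeasure P]
    (ν : Measure (ℤ × ℤ))
    (Y : ℕ → Ω → ℤ × ℤ) (hYmeas : ∀ i, Measurable (Y i))
    (hiid : iIndepFun Y P)
    (hdist : ∀ i, Measure.map (Y i) P = ν)
    (A : Set (ℤ × ℤ)) :
    ∀ᵐ ω ∂P, Tendsto (fun m : ℕ =>
      (∑ i ∈ Finset.range m, A.indicator (fun _ => (1 : ℝ)) (Y i ω)) / m) atTop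
      (nhds (ν A).toReal) := by
  have hA : MeasurableSet A := A.to_countable.measurableSet
  set f : ℤ × ℤ → ℝ := A.indicator (fun _ => 1) with hfdef
  have hfm : Measurable f := measurable_const.indicator hA
  have hint : Integrable (f ∘ Y 0) P := by
    have h : f ∘ Y 0 = (Y 0 ⁻¹' A).indicator (fun _ => (1 : ℝ)) := by
      ext ω
      by_cases h : Y 0 ω ∈ A <;>
        simp [hfdef, Set.indicator, Set.mem_preimage, h]
    rw [h]
    exact (integrable_const 1).indicator (hA.preimage (hYmeas 0))
  have hind : Pairwise (Function.onFun (fun a b => IndepFun a b P) fun i => f ∘ Y i) :=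
    fun i j hij => (hiid.indepFun hij).comp hfm hfm
  have hident : ∀ i, IdentDistrib (f ∘ Y i) (f ∘ Y 0) P P := fun i =>
    { aemeasurable_fst := (hfm.comp (hYmeas i)).aemeasurable
      aemeasurable_snd := (hfm.comp (hYmeas 0)).aemeasurable
      map_eq := by
        rw [← Measure.map_map hfm (hYmeas i), ← Measure.map_map hfm (hYmeas 0),
          hdist i, hdist 0] }
  have hexp : P[f ∘ Y 0] = (ν A).toReal := by
    calc P[f ∘ Y 0] = ∫ y, f y ∂(Measure.map (Y 0) P) :=
          (integral_map (hYmeas 0).aemeasurable hfm.aestronglyMeasurable).symm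
      _ = ∫ y, f y ∂ν := by rw [hdist 0]
      _ = (ν A).toReal := integral_indicator_one hA
  filter_upwards [strong_law_ae_real _ hint hind hident] with ω hω
  rw [hexp] at hω
  exact hω

/-- In the edge-exchangeable model with i.i.d. edges `Y i` with labels in `ℤ`
(labels `≤ 0` are blips, replaced by fresh degree-one vertices), no loops, and positive
probability of dust/attached-star edges (an endpoint `≤ 0`): almost surely
`v(G_m) ≍ m` and `e(G_m) ≍ m` as `m → ∞` (extremely sparse), and all but an `o(1)`
fraction of edges and vertices lie in the dust or attached stars (the central part
contributes `o(m)` edges and vertices). -/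
theorem stmt16 {Ω : Type*} [MeasurableSpace Ω] (P : Measure Ω) [IsProbabilityMeasure P]
    (ν : Measure (ℤ × ℤ)) [IsProbabilityMeasure ν]
    (Y : ℕ → Ω → ℤ × ℤ) (hYmeas : ∀ i, Measurable (Y i))
    (hiid : iIndepFun Y P)
    (hdist : ∀ i, Measure.map (Y i) P = ν)
    (hNoLoop : ν {p : ℤ × ℤ | p.1 = p.2} = 0)
    (hDust : 0 < ν {p : ℤ × ℤ | p.1 ≤ 0 ∨ p.2 ≤ 0})
    (v e centralE centralV : ℕ → Ω → ℕ)
    (hv : ∀ m ω, v m ω =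
        Set.ncard {k : ℤ | 1 ≤ k ∧ ∃ i < m, (Y i ω).1 = k ∨ (Y i ω).2 = k} +
        ∑ i ∈ Finset.range m,
          ((if (Y i ω).1 ≤ 0 then 1 else 0) + (if (Y i ω).2 ≤ 0 then 1 else 0)))
    (hcE : ∀ m ω, centralE m ω =
        Set.ncard {s : Sym2 ℤ | (∀ x ∈ s, 1 ≤ x) ∧ ∃ i < m, s = Sym2.mk (Y i ω).1 (Y i ω).2})
    (he : ∀ m ω, e m ω = centralE m ω +
        ((Finset.range m).filter (fun i => (Y i ω).1 ≤ 0 ∨ (Y i ω).2 ≤ 0)).card)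
    (hcV : ∀ m ω, centralV m ω =
        Set.ncard {k : ℤ | 1 ≤ k ∧ ∃ i < m,
          (1 ≤ (Y i ω).1 ∧ 1 ≤ (Y i ω).2) ∧ ((Y i ω).1 = k ∨ (Y i ω).2 = k)}) :
    ∀ᵐ ω ∂P,
      (∃ c C : ℝ, 0 < c ∧ 0 < C ∧ ∀ᶠ m : ℕ in atTop,
        c * m ≤ (v m ω : ℝ) ∧ (v m ω : ℝ) ≤ C * m ∧
        c * m ≤ (e m ω : ℝ) ∧ (e m ω : ℝ) ≤ C * m) ∧
      Tendsto (fun m : ℕ => (centralE m ω : ℝ) / m) atTop (nhds 0) ∧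
      Tendsto (fun m : ℕ => (centralV m ω : ℝ) / m) atTop (nhds 0) := by
  classical
  set Dust : Set (ℤ × ℤ) := {p : ℤ × ℤ | p.1 ≤ 0 ∨ p.2 ≤ 0} with hDustdef
  set B : ℕ → Set (ℤ × ℤ) := fun n => Set.Icc (1 : ℤ) (n : ℤ) ×ˢ Set.Icc (1 : ℤ) (n : ℤ)
    with hBdef
  set T : ℕ → Set (ℤ × ℤ) := fun n => {p : ℤ × ℤ | 1 ≤ p.1 ∧ 1 ≤ p.2} \ B n with hTdef
  have hBfin : ∀ n, (B n).Finite := fun n => (Set.finite_Icc _ _).prod (Set.finite_Icc _ _)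
  have hBmono : Monotone B := fun a b hab =>
    Set.prod_mono (Set.Icc_subset_Icc le_rfl (by exact_mod_cast hab))
      (Set.Icc_subset_Icc le_rfl (by exact_mod_cast hab))
  have hTanti : Antitone T := fun a b hab =>
    Set.diff_subset_diff_right (hBmono hab)
  have hTempty : ⋂ n, T n = (∅ : Set (ℤ × ℤ)) := by
    rw [Set.eq_empty_iff_forall_notMem]
    intro p hp
    have h0 := Set.mem_iInter.1 hp ((max p.1 p.2).toNat)
    obtain ⟨⟨h1, h2⟩, h3⟩ := h0
    refine h3 ⟨⟨h1, ?_⟩, h2, ?_⟩ <;>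
    · rw [Int.toNat_of_nonneg (le_trans (by linarith) (le_max_left p.1 p.2))]
      first
        | exact le_max_left _ _
        | exact le_max_right _ _
  have hTlim : Tendsto (fun n => (ν (T n)).toReal) atTop (nhds 0) := by
    have h := tendsto_measure_iInter_atTop
      (fun n => ((T n).to_countable.measurableSet).nullMeasurableSet) hTanti
      ⟨0, measure_ne_top ν _⟩
    rw [hTempty, measure_empty] at h
    have := (ENNReal.tendsto_toReal (a := 0) (by simp)).comp h
    exact this
  have hconv : ∀ (A : Set (ℤ × ℤ)) (ω : Ω) (m : ℕ),
      (∑ i ∈ Finset.range m, A.indicator (fun _ => (1 : ℝ)) (Y i ω)) =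
        (((Finset.range m).filter (fun i => Y i ω ∈ A)).card : ℝ) := by
    intro A ω m
    rw [Finset.card_filter]
    push_cast
    refine Finset.sum_congr rfl fun i _ => ?_
    by_cases h : Y i ω ∈ A <;> simp [Set.indicator, h]
  filter_upwards [slln_count P ν Y hYmeas hiid hdist Dust,
    ae_all_iff.2 fun n => slln_count P ν Y hYmeas hiid hdist (T n)] with ω hωD' hωT'
  have hωD : Tendsto (fun m : ℕ =>
      (((Finset.range m).filter (fun i => Y i ω ∈ Dust)).card : ℝ) / m) atTop
      (nhds (ν Dust).toReal) := by
    refine hωD'.congr fun m => ?_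
    rw [hconv]
    congr!
  have hωT : ∀ n, Tendsto (fun m : ℕ =>
      (((Finset.range m).filter (fun i => Y i ω ∈ T n)).card : ℝ) / m) atTop
      (nhds (ν (T n)).toReal) := by
    intro n
    refine (hωT' n).congr fun m => ?_
    rw [hconv]
    congr!
  -- counting bounds
  have hrangefin : ∀ m : ℕ, ((Finset.range m : Finset ℕ) : Set ℕ).Finite :=
    fun m => (Finset.range m).finite_toSet
  have hcE_le : ∀ n m : ℕ, centralE m ω ≤ (B n).ncard +
      ((Finset.range m).filter (fun i => Y i ω ∈ T n)).card := by
    intro n m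
    rw [hcE]
    have hsub : {s : Sym2 ℤ | (∀ x ∈ s, 1 ≤ x) ∧ ∃ i < m, s = Sym2.mk (Y i ω).1 (Y i ω).2} ⊆
        (fun p : ℤ × ℤ => Sym2.mk p.1 p.2) '' (B n) ∪
          (fun i => Sym2.mk (Y i ω).1 (Y i ω).2) ''
            (((Finset.range m).filter (fun i => Y i ω ∈ T n)) : Set ℕ) := by
      rintro s ⟨hall, i, hi, rfl⟩
      have hc1 : 1 ≤ (Y i ω).1 := hall _ (Sym2.mem_mk_left _ _)
      have hc2 : 1 ≤ (Y i ω).2 := hall _ (Sym2.mem_mk_right _ _)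
      by_cases hB : Y i ω ∈ B n
      · exact Or.inl ⟨Y i ω, hB, rfl⟩
      · refine Or.inr ⟨i, ?_, rfl⟩
        simp only [Finset.coe_filter, Set.mem_setOf_eq, Finset.mem_range]
        exact ⟨hi, ⟨⟨hc1, hc2⟩, hB⟩⟩
    calc {s : Sym2 ℤ | (∀ x ∈ s, 1 ≤ x) ∧ ∃ i < m, s = Sym2.mk (Y i ω).1 (Y i ω).2}.ncard
        ≤ ((fun p : ℤ × ℤ => Sym2.mk p.1 p.2) '' (B n) ∪
            (fun i => Sym2.mk (Y i ω).1 (Y i ω).2) ''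
              (((Finset.range m).filter (fun i => Y i ω ∈ T n)) : Set ℕ)).ncard :=
          Set.ncard_le_ncard hsub
            (((hBfin n).image _).union
              (((Finset.filter _ (Finset.range m)).finite_toSet).image _))
      _ ≤ ((fun p : ℤ × ℤ => Sym2.mk p.1 p.2) '' (B n)).ncard +
            ((fun i => Sym2.mk (Y i ω).1 (Y i ω).2) ''
              (((Finset.range m).filter (fun i => Y i ω ∈ T n)) : Set ℕ)).ncard :=
          Set.ncard_union_le _ _
      _ ≤ (B n).ncard +
            ((Finset.range m).filter (fun i => Y i ω ∈ T n)).card := by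
          gcongr
          · exact Set.ncard_image_le (hBfin n)
          · rw [← Set.ncard_coe_finset ((Finset.range m).filter (fun i => Y i ω ∈ T n))]
            exact Set.ncard_image_le (Finset.finite_toSet _)
  have hcV_le : ∀ n m : ℕ, centralV m ω ≤ 2 * (B n).ncard +
      2 * ((Finset.range m).filter (fun i => Y i ω ∈ T n)).card := by
    intro n m
    rw [hcV]
    set I : Set ℕ := (((Finset.range m).filter (fun i => Y i ω ∈ T n)) : Set ℕ) with hIdef
    have hIfin : I.Finite := Finset.finite_toSet _
    have hsub : {k : ℤ | 1 ≤ k ∧ ∃ i < m,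
          (1 ≤ (Y i ω).1 ∧ 1 ≤ (Y i ω).2) ∧ ((Y i ω).1 = k ∨ (Y i ω).2 = k)} ⊆
        (Prod.fst '' (B n) ∪ Prod.snd '' (B n)) ∪
          ((fun i => (Y i ω).1) '' I ∪ (fun i => (Y i ω).2) '' I) := by
      rintro k ⟨hk1, i, hi, ⟨hc1, hc2⟩, hk⟩
      by_cases hB : Y i ω ∈ B n
      · rcases hk with hk | hk
        · exact Or.inl (Or.inl ⟨Y i ω, hB, hk⟩)
        · exact Or.inl (Or.inr ⟨Y i ω, hB, hk⟩)
      · have hiI : i ∈ I := by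
          simp only [hIdef, Finset.coe_filter, Set.mem_setOf_eq, Finset.mem_range]
          exact ⟨hi, ⟨⟨hc1, hc2⟩, hB⟩⟩
        rcases hk with hk | hk
        · exact Or.inr (Or.inl ⟨i, hiI, hk⟩)
        · exact Or.inr (Or.inr ⟨i, hiI, hk⟩)
    have hfin : ((Prod.fst '' (B n) ∪ Prod.snd '' (B n)) ∪
        ((fun i => (Y i ω).1) '' I ∪ (fun i => (Y i ω).2) '' I)).Finite :=
      (((hBfin n).image _).union ((hBfin n).image _)).union
        ((hIfin.image _).union (hIfin.image _))
    calc {k : ℤ | 1 ≤ k ∧ ∃ i < m,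
          (1 ≤ (Y i ω).1 ∧ 1 ≤ (Y i ω).2) ∧ ((Y i ω).1 = k ∨ (Y i ω).2 = k)}.ncard
        ≤ ((Prod.fst '' (B n) ∪ Prod.snd '' (B n)) ∪
            ((fun i => (Y i ω).1) '' I ∪ (fun i => (Y i ω).2) '' I)).ncard :=
          Set.ncard_le_ncard hsub hfin
      _ ≤ (Prod.fst '' (B n) ∪ Prod.snd '' (B n)).ncard +
            ((fun i => (Y i ω).1) '' I ∪ (fun i => (Y i ω).2) '' I).ncard :=
          Set.ncard_union_le _ _
      _ ≤ ((Prod.fst '' (B n)).ncard + (Prod.snd '' (B n)).ncard) +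
            (((fun i => (Y i ω).1) '' I).ncard + ((fun i => (Y i ω).2) '' I).ncard) := by
          gcongr <;> exact Set.ncard_union_le _ _
      _ ≤ ((B n).ncard + (B n).ncard) + (I.ncard + I.ncard) := by
          gcongr <;>
            first
              | exact Set.ncard_image_le (hBfin n)
              | exact Set.ncard_image_le hIfin
      _ = 2 * (B n).ncard + 2 * I.ncard := by ring
      _ = 2 * (B n).ncard +
            2 * ((Finset.range m).filter (fun i => Y i ω ∈ T n)).card := by
          rw [hIdef, Set.ncard_coe_finset]
  -- upper bounds for v and e
  have hv_le : ∀ m : ℕ, v m ω ≤ 4 * m := by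
    intro m
    rw [hv]
    have h1 : {k : ℤ | 1 ≤ k ∧ ∃ i < m, (Y i ω).1 = k ∨ (Y i ω).2 = k}.ncard ≤ 2 * m := by
      have hsub : {k : ℤ | 1 ≤ k ∧ ∃ i < m, (Y i ω).1 = k ∨ (Y i ω).2 = k} ⊆
          (fun i => (Y i ω).1) '' ((Finset.range m : Finset ℕ) : Set ℕ) ∪
          (fun i => (Y i ω).2) '' ((Finset.range m : Finset ℕ) : Set ℕ) := by
        rintro k ⟨-, i, hi, hk | hk⟩
        · exact Or.inl ⟨i, by simpa using hi, hk⟩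
        · exact Or.inr ⟨i, by simpa using hi, hk⟩
      calc {k : ℤ | 1 ≤ k ∧ ∃ i < m, (Y i ω).1 = k ∨ (Y i ω).2 = k}.ncard
          ≤ ((fun i => (Y i ω).1) '' ((Finset.range m : Finset ℕ) : Set ℕ) ∪
             (fun i => (Y i ω).2) '' ((Finset.range m : Finset ℕ) : Set ℕ)).ncard :=
            Set.ncard_le_ncard hsub
              (((hrangefin m).image _).union ((hrangefin m).image _))
        _ ≤ ((fun i => (Y i ω).1) '' ((Finset.range m : Finset ℕ) : Set ℕ)).ncard +
             ((fun i => (Y i ω).2) '' ((Finset.range m : Finset ℕ) : Set ℕ)).ncard :=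
            Set.ncard_union_le _ _
        _ ≤ m + m := by
            have := Set.ncard_coe_finset (Finset.range m)
            gcongr <;>
              · refine le_trans (Set.ncard_image_le (hrangefin m)) ?_
                rw [Set.ncard_coe_finset, Finset.card_range]
        _ = 2 * m := by ring
    have h2 : (∑ i ∈ Finset.range m,
        ((if (Y i ω).1 ≤ 0 then 1 else 0) + (if (Y i ω).2 ≤ 0 then 1 else 0))) ≤ 2 * m := by
      calc (∑ i ∈ Finset.range m,
            ((if (Y i ω).1 ≤ 0 then 1 else 0) + (if (Y i ω).2 ≤ 0 then 1 else 0)))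
          ≤ ∑ _i ∈ Finset.range m, 2 := by
            refine Finset.sum_le_sum fun i _ => ?_
            split_ifs <;> norm_num
        _ = 2 * m := by simp [Finset.sum_const, mul_comm]
    omega
  have he_le : ∀ m : ℕ, e m ω ≤ 4 * m := by
    intro m
    rw [he]
    have h1 : centralE m ω ≤ m := by
      rw [hcE]
      have hsub : {s : Sym2 ℤ | (∀ x ∈ s, 1 ≤ x) ∧ ∃ i < m, s = Sym2.mk (Y i ω).1 (Y i ω).2} ⊆
          (fun i => Sym2.mk (Y i ω).1 (Y i ω).2) '' ((Finset.range m : Finset ℕ) : Set ℕ) := by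
        rintro s ⟨-, i, hi, rfl⟩
        exact ⟨i, by simpa using hi, rfl⟩
      refine le_trans (Set.ncard_le_ncard hsub ((hrangefin m).image _)) ?_
      refine le_trans (Set.ncard_image_le (hrangefin m)) ?_
      rw [Set.ncard_coe_finset, Finset.card_range]
    have h2 : ((Finset.range m).filter
        (fun i => (Y i ω).1 ≤ 0 ∨ (Y i ω).2 ≤ 0)).card ≤ m := by
      refine le_trans (Finset.card_filter_le _ _) ?_
      simp
    omega
  -- lower bounds via the dust count
  have hv_ge : ∀ m : ℕ,
      ((Finset.range m).filter (fun i => Y i ω ∈ Dust)).card ≤ v m ω := by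
    intro m
    rw [hv]
    refine le_trans ?_ (Nat.le_add_left _ _)
    rw [Finset.card_filter]
    refine Finset.sum_le_sum fun i _ => ?_
    by_cases h1 : (Y i ω).1 ≤ 0 <;> by_cases h2 : (Y i ω).2 ≤ 0 <;>
      simp [hDustdef, h1, h2]
  have he_ge : ∀ m : ℕ,
      ((Finset.range m).filter (fun i => Y i ω ∈ Dust)).card ≤ e m ω := by
    intro m
    rw [he]
    refine le_trans (le_of_eq ?_) (Nat.le_add_left _ _)
    congr 1
  refine ⟨?_, ?_, ?_⟩
  · -- linear growth
    have hpd : 0 < (ν Dust).toReal :=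
      ENNReal.toReal_pos hDust.ne' (measure_ne_top ν _)
    refine ⟨(ν Dust).toReal / 2, 4, by linarith, by norm_num, ?_⟩
    have hev : ∀ᶠ m : ℕ in atTop, (ν Dust).toReal / 2 <
        (((Finset.range m).filter (fun i => Y i ω ∈ Dust)).card : ℝ) / m :=
      hωD.eventually_const_lt (by linarith)
    filter_upwards [hev, eventually_ge_atTop 1] with m h1 h2
    have hm : (0 : ℝ) < m := by exact_mod_cast h2
    have hcnt : (ν Dust).toReal / 2 * m ≤
        (((Finset.range m).filter (fun i => Y i ω ∈ Dust)).card : ℝ) :=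
      (le_div_iff₀ hm).1 h1.le
    have hvub : (v m ω : ℝ) ≤ 4 * m := by exact_mod_cast hv_le m
    have heub : (e m ω : ℝ) ≤ 4 * m := by exact_mod_cast he_le m
    exact ⟨le_trans hcnt (by exact_mod_cast hv_ge m), hvub,
      le_trans hcnt (by exact_mod_cast he_ge m), heub⟩
  · -- centralE is o(m)
    refine tendsto_order.2 ⟨fun a ha => Eventually.of_forall fun m =>
      lt_of_lt_of_le ha (by positivity), fun ε hε => ?_⟩
    obtain ⟨n, hn⟩ : ∃ n, (ν (T n)).toReal < ε / 4 :=
      (hTlim.eventually_lt_const (by linarith)).exists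
    have h1 : Tendsto (fun m : ℕ => ((B n).ncard : ℝ) / m +
        (((Finset.range m).filter (fun i => Y i ω ∈ T n)).card : ℝ) / m) atTop
        (nhds (0 + (ν (T n)).toReal)) :=
      (tendsto_const_div_atTop_nhds_zero_nat _).add (hωT n)
    have h2 := h1.eventually_lt_const
      (show (0 : ℝ) + (ν (T n)).toReal < ε by linarith)
    filter_upwards [h2, eventually_ge_atTop 1] with m hm hm1
    have hmp : (0 : ℝ) < m := by exact_mod_cast hm1
    have hle : (centralE m ω : ℝ) ≤ ((B n).ncard : ℝ) +
        (((Finset.range m).filter (fun i => Y i ω ∈ T n)).card : ℝ) := by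
      exact_mod_cast hcE_le n m
    have hdiv : (centralE m ω : ℝ) / m ≤ ((B n).ncard : ℝ) / m +
        (((Finset.range m).filter (fun i => Y i ω ∈ T n)).card : ℝ) / m := by
      rw [← add_div]
      gcongr
    exact lt_of_le_of_lt hdiv hm
  · -- centralV is o(m)
    refine tendsto_order.2 ⟨fun a ha => Eventually.of_forall fun m =>
      lt_of_lt_of_le ha (by positivity), fun ε hε => ?_⟩
    obtain ⟨n, hn⟩ : ∃ n, (ν (T n)).toReal < ε / 4 :=
      (hTlim.eventually_lt_const (by linarith)).exists
    have h1 : Tendsto (fun m : ℕ => (2 * ((B n).ncard : ℝ)) / m +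
        2 * ((((Finset.range m).filter (fun i => Y i ω ∈ T n)).card : ℝ) / m)) atTop
        (nhds (0 + 2 * (ν (T n)).toReal)) :=
      (tendsto_const_div_atTop_nhds_zero_nat _).add ((hωT n).const_mul 2)
    have h2 := h1.eventually_lt_const
      (show (0 : ℝ) + 2 * (ν (T n)).toReal < ε by linarith)
    filter_upwards [h2, eventually_ge_atTop 1] with m hm hm1
    have hmp : (0 : ℝ) < m := by exact_mod_cast hm1
    have hle : (centralV m ω : ℝ) ≤ 2 * ((B n).ncard : ℝ) +
        2 * (((Finset.range m).filter (fun i => Y i ω ∈ T n)).card : ℝ) := by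
      have := hcV_le n m
      exact_mod_cast this
    have hdiv : (centralV m ω : ℝ) / m ≤ 2 * ((B n).ncard : ℝ) / m +
        2 * ((((Finset.range m).filter (fun i => Y i ω ∈ T n)).card : ℝ) / m) := by
      have heq : 2 * ((B n).ncard : ℝ) / m +
          2 * ((((Finset.range m).filter (fun i => Y i ω ∈ T n)).card : ℝ) / m) =
          (2 * ((B n).ncard : ℝ) +
            2 * (((Finset.range m).filter (fun i => Y i ω ∈ T n)).card : ℝ)) / m := by
        ring
      rw [heq]
      gcongr
    exact lt_of_le_of_lt hdiv hm
end
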